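/- arXiv:2005.12851 — 6 statements merged into one kernel-verified Lean document; each statement's English description precedes it below -/
import Mathlib

section
/- The solvability set I(p₀) is a closed subset of ℝ: if a sequence sₙ ∈ I(p₀) converges to s, then s ∈ I(p₀). -/
open Real Set MeasureTheory

/-- The relativistic operator `φ(v) = v / √(1 - v²/c²)`. -/
noncomputable def phi (c v : ℝ) : ℝ := v / Real.sqrt (1 - v ^ 2 / c ^ 2)

/-- `x` is a `T`-periodic solution of the relativistic pendulum equation
`(φ(x'))' + a x' + b sin x = p`. -/
def IsPendSol (c a b T : ℝ) (p x : ℝ → ℝ) : Prop :=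
  Function.Periodic x T ∧
  ContDiff ℝ 1 x ∧
  (∀ t : ℝ, |deriv x t| < c) ∧
  ContDiff ℝ 1 (fun t : ℝ => phi c (deriv x t)) ∧
  ∀ t : ℝ, deriv (fun τ : ℝ => phi c (deriv x τ)) t + a * deriv x t + b * Real.sin (x t) = p t

/-- The solvability set `I(p₀)`: the values `s` for which the relativistic pendulum
equation with forcing `p₀ + s` has a `T`-periodic solution. -/
def solvSet (c a b T : ℝ) (p₀ : ℝ → ℝ) : Set ℝ :=
  {s : ℝ | ∃ x : ℝ → ℝ, IsPendSol c a b T (fun t => p₀ t + s) x}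

namespace RelPend


noncomputable def psi (c w : ℝ) : ℝ := w / Real.sqrt (1 + w ^ 2 / c ^ 2)

variable {c : ℝ}

lemma one_le_g (hc : 0 < c) (w : ℝ) : 1 ≤ 1 + w ^ 2 / c ^ 2 :=
  le_add_of_nonneg_right (by positivity)

lemma sqrtg_pos (hc : 0 < c) (w : ℝ) : 0 < Real.sqrt (1 + w ^ 2 / c ^ 2) :=
  Real.sqrt_pos.2 (by positivity)

lemma one_le_sqrtg (hc : 0 < c) (w : ℝ) : 1 ≤ Real.sqrt (1 + w ^ 2 / c ^ 2) := by
  rw [show (1:ℝ) = Real.sqrt 1 by simp]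
  exact Real.sqrt_le_sqrt (by simpa using one_le_g hc w)

lemma abs_psi_lt (hc : 0 < c) (w : ℝ) : |psi c w| < c := by
  set S := Real.sqrt (1 + w ^ 2 / c ^ 2) with hSdef
  have hSpos : 0 < S := sqrtg_pos hc w
  have hS2 : S ^ 2 = 1 + w ^ 2 / c ^ 2 := Real.sq_sqrt (by positivity)
  have hcs : (c * S) ^ 2 = c ^ 2 + w ^ 2 := by
    rw [mul_pow, hS2]; field_simp
  rw [psi, abs_div, abs_of_pos hSpos, div_lt_iff₀ hSpos]
  nlinarith [sq_abs w, abs_nonneg w, mul_pos hc hSpos]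

lemma phi_psi (hc : 0 < c) (w : ℝ) : phi c (psi c w) = w := by
  set S := Real.sqrt (1 + w ^ 2 / c ^ 2) with hSdef
  have hSpos : 0 < S := sqrtg_pos hc w
  have hS2 : S ^ 2 = 1 + w ^ 2 / c ^ 2 := Real.sq_sqrt (by positivity)
  have key : 1 - (w / S) ^ 2 / c ^ 2 = (1 / S) ^ 2 := by
    rw [div_pow, div_pow, one_pow, hS2]
    field_simp
    ring
  show phi c (w / S) = w
  rw [phi, key, Real.sqrt_sq (by positivity)]
  field_simp

lemma psi_phi (hc : 0 < c) {v : ℝ} (hv : |v| < c) : psi c (phi c v) = v := by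
  have hv2 : v ^ 2 < c ^ 2 := by nlinarith [sq_abs v, abs_nonneg v]
  have he : 0 < 1 - v ^ 2 / c ^ 2 := by
    rw [sub_pos, div_lt_one (by positivity)]; exact hv2
  set S := Real.sqrt (1 - v ^ 2 / c ^ 2) with hSdef
  have hSpos : 0 < S := Real.sqrt_pos.2 he
  have hS2 : S ^ 2 = 1 - v ^ 2 / c ^ 2 := Real.sq_sqrt he.le
  have key : 1 + (v / S) ^ 2 / c ^ 2 = (1 / S) ^ 2 := by
    have h3 : c ^ 2 - v ^ 2 ≠ 0 := by nlinarith
    rw [div_pow, div_pow, one_pow, hS2]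
    field_simp
    ring
  show psi c (v / S) = v
  rw [psi, key, Real.sqrt_sq (by positivity)]
  field_simp

lemma hasDerivAt_psi (hc : 0 < c) (w : ℝ) :
    HasDerivAt (psi c) (1 / ((1 + w ^ 2 / c ^ 2) * Real.sqrt (1 + w ^ 2 / c ^ 2))) w := by
  set S := Real.sqrt (1 + w ^ 2 / c ^ 2) with hSdef
  have hSpos : 0 < S := sqrtg_pos hc w
  have hS2 : S ^ 2 = 1 + w ^ 2 / c ^ 2 := Real.sq_sqrt (by positivity)
  have hG : HasDerivAt (fun w : ℝ => 1 + w ^ 2 / c ^ 2) (2 * w / c ^ 2) w := by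
    have : HasDerivAt (fun w : ℝ => w ^ 2) (2 * w) w := by
      simpa using (hasDerivAt_pow 2 w)
    simpa [div_eq_mul_inv] using ((this.div_const (c ^ 2)).const_add 1)
  have hSd : HasDerivAt (fun w : ℝ => Real.sqrt (1 + w ^ 2 / c ^ 2))
      (2 * w / c ^ 2 / (2 * Real.sqrt (1 + w ^ 2 / c ^ 2))) w := hG.sqrt (by positivity)
  have hQ := (hasDerivAt_id w).div hSd (sqrtg_pos hc w).ne'
  refine hQ.congr_deriv (Eq.symm ?_)
  rw [← hSdef]
  have hS2' : S ^ 2 * c ^ 2 = c ^ 2 + w ^ 2 := by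
    rw [hS2]; field_simp
  have h1 : (1 * S - id w * (2 * w / c ^ 2 / (2 * S))) = 1 / S := by
    simp only [id, one_mul]
    rw [eq_div_iff hSpos.ne']
    field_simp [hc.ne']
    linear_combination hS2'
  rw [h1, ← hS2]
  rw [div_div]
  ring

lemma lipschitz_psi (hc : 0 < c) : LipschitzWith 1 (psi c) := by
  apply lipschitzWith_of_nnnorm_deriv_le
  · exact fun w => (hasDerivAt_psi hc w).differentiableAt
  · intro w
    rw [(hasDerivAt_psi hc w).deriv, ← NNReal.coe_le_coe, coe_nnnorm, NNReal.coe_one,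
      Real.norm_eq_abs]
    have hg := one_le_g hc w
    have hs := one_le_sqrtg hc w
    rw [abs_of_nonneg (by positivity), div_le_one (by positivity)]
    nlinarith

lemma lipschitz_sin : LipschitzWith 1 Real.sin := by
  apply lipschitzWith_of_nnnorm_deriv_le Real.differentiable_sin
  intro x
  rw [Real.deriv_sin, ← NNReal.coe_le_coe, coe_nnnorm, NNReal.coe_one, Real.norm_eq_abs]
  exact Real.abs_cos_le_one x





lemma phi_zero : phi c 0 = 0 := by simp [phi]

lemma continuous_psi (hc : 0 < c) : Continuous (psi c) := (lipschitz_psi hc).continuous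

/-- The first-order vector field associated to the pendulum equation. -/
noncomputable def vf (c a b : ℝ) (p : ℝ → ℝ) (t : ℝ) (z : ℝ × ℝ) : ℝ × ℝ :=
  (psi c z.2, p t - a * psi c z.2 - b * Real.sin z.1)

lemma lipschitz_vf (hc : 0 < c) {a b : ℝ} (ha : 0 ≤ a) (hb : 0 ≤ b) (p : ℝ → ℝ) (t : ℝ) :
    LipschitzWith (1 + a.toNNReal + b.toNNReal) (vf c a b p t) := by
  have hK : ((1 + a.toNNReal + b.toNNReal : NNReal) : ℝ) = 1 + a + b := by
    simp [Real.coe_toNNReal a ha, Real.coe_toNNReal b hb]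
  apply LipschitzWith.of_dist_le_mul
  intro z z'
  rw [Prod.dist_eq (x := vf c a b p t z), Prod.dist_eq (x := z), hK]
  have hpsi : dist (psi c z.2) (psi c z'.2) ≤ dist z.2 z'.2 := by
    simpa using (lipschitz_psi hc).dist_le_mul z.2 z'.2
  have hsin : dist (Real.sin z.1) (Real.sin z'.1) ≤ dist z.1 z'.1 := by
    simpa using lipschitz_sin.dist_le_mul z.1 z'.1
  have h1 : dist z.1 z'.1 ≤ max (dist z.1 z'.1) (dist z.2 z'.2) := le_max_left _ _
  have h2 : dist z.2 z'.2 ≤ max (dist z.1 z'.1) (dist z.2 z'.2) := le_max_right _ _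
  have hd1 : (0:ℝ) ≤ dist z.1 z'.1 := dist_nonneg
  have hd2 : (0:ℝ) ≤ dist z.2 z'.2 := dist_nonneg
  have hm0 : (0:ℝ) ≤ max (dist z.1 z'.1) (dist z.2 z'.2) := le_trans hd1 h1
  apply max_le
  · have : dist (vf c a b p t z).1 (vf c a b p t z').1 = dist (psi c z.2) (psi c z'.2) := rfl
    rw [this]
    nlinarith
  · have hA : (vf c a b p t z).2 - (vf c a b p t z').2
        = a * (psi c z'.2 - psi c z.2) + b * (Real.sin z'.1 - Real.sin z.1) := by
      simp only [vf]; ring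
    have : dist (vf c a b p t z).2 (vf c a b p t z').2
        = |a * (psi c z'.2 - psi c z.2) + b * (Real.sin z'.1 - Real.sin z.1)| := by
      rw [Real.dist_eq, hA]
    rw [this]
    have e1 : |psi c z'.2 - psi c z.2| ≤ dist z.2 z'.2 := by
      rw [abs_sub_comm, ← Real.dist_eq]; exact hpsi
    have e2 : |Real.sin z'.1 - Real.sin z.1| ≤ dist z.1 z'.1 := by
      rw [abs_sub_comm, ← Real.dist_eq]; exact hsin
    calc |a * (psi c z'.2 - psi c z.2) + b * (Real.sin z'.1 - Real.sin z.1)|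
        ≤ |a * (psi c z'.2 - psi c z.2)| + |b * (Real.sin z'.1 - Real.sin z.1)| := abs_add_le _ _
      _ = a * |psi c z'.2 - psi c z.2| + b * |Real.sin z'.1 - Real.sin z.1| := by
          rw [abs_mul, abs_mul, abs_of_nonneg ha, abs_of_nonneg hb]
      _ ≤ (1 + a + b) * max (dist z.1 z'.1) (dist z.2 z'.2) := by
          nlinarith [mul_le_mul_of_nonneg_left (e1.trans h2) ha,
            mul_le_mul_of_nonneg_left (e2.trans h1) hb]

lemma periodic_deriv {f : ℝ → ℝ} {T : ℝ} (hf : ContDiff ℝ 1 f)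
    (hp : Function.Periodic f T) : Function.Periodic (deriv f) T := by
  intro t
  have h2 := ((hf.differentiable one_ne_zero) (t + T)).hasDerivAt
  have h3 := h2.comp t ((hasDerivAt_id t).add_const T)
  have h4 : (fun s : ℝ => f (s + T)) = f := funext hp
  have h5 : HasDerivAt (fun s : ℝ => f (s + T)) (deriv f (t + T)) t := by
    exact h3.congr_deriv (mul_one _)
  rw [h4] at h5
  exact h5.deriv.symm

section facts

variable {a b T : ℝ} {p x : ℝ → ℝ}

lemma sol_hasDerivAt_z (hc : 0 < c) (hsol : IsPendSol c a b T p x) (t : ℝ) :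
    HasDerivAt (fun τ => (x τ, phi c (deriv x τ)))
      (vf c a b p t (x t, phi c (deriv x t))) t := by
  obtain ⟨hper, hx1, hxd, hy1, heq⟩ := hsol
  have hx' : HasDerivAt x (deriv x t) t := (hx1.differentiable one_ne_zero t).hasDerivAt
  have hy' : HasDerivAt (fun τ => phi c (deriv x τ))
      (deriv (fun τ => phi c (deriv x τ)) t) t := (hy1.differentiable one_ne_zero t).hasDerivAt
  have e1 : psi c (phi c (deriv x t)) = deriv x t := psi_phi hc (hxd t)
  have e2 : deriv (fun τ => phi c (deriv x τ)) t
      = p t - a * psi c (phi c (deriv x t)) - b * Real.sin (x t) := by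
    rw [e1]; linarith [heq t]
  have hpair : vf c a b p t (x t, phi c (deriv x t))
      = (deriv x t, deriv (fun τ => phi c (deriv x τ)) t) := by
    simp only [vf]; rw [e2, e1]
  rw [hpair]
  exact hx'.prodMk hy'

lemma sol_y_bound (hc : 0 < c) (ha : 0 ≤ a) (hb : 0 ≤ b) (hT : 0 < T)
    (hsol : IsPendSol c a b T p x) {P : ℝ} (hp : ∀ t, |p t| ≤ P) (t : ℝ) :
    |phi c (deriv x t)| ≤ (P + a * c + b) * T := by
  obtain ⟨hper, hx1, hxd, hy1, heq⟩ := hsol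
  set y : ℝ → ℝ := fun τ => phi c (deriv x τ) with hy
  have hP0 : 0 ≤ P := le_trans (abs_nonneg _) (hp 0)
  have hL0 : 0 ≤ P + a * c + b := by positivity
  -- y is Lipschitz
  have hdy : ∀ τ, |deriv y τ| ≤ P + a * c + b := by
    intro τ
    have hde : deriv y τ = p τ - a * deriv x τ - b * Real.sin (x τ) := by
      linarith [heq τ]
    rw [hde]
    have h1 : |p τ - a * deriv x τ - b * Real.sin (x τ)|
        ≤ |p τ| + |a * deriv x τ| + |b * Real.sin (x τ)| := by
      calc |p τ - a * deriv x τ - b * Real.sin (x τ)|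
          ≤ |p τ - a * deriv x τ| + |b * Real.sin (x τ)| := abs_sub _ _
        _ ≤ |p τ| + |a * deriv x τ| + |b * Real.sin (x τ)| := by
            linarith [abs_sub (p τ) (a * deriv x τ)]
    have h2 : |a * deriv x τ| ≤ a * c := by
      rw [abs_mul, abs_of_nonneg ha]
      exact mul_le_mul_of_nonneg_left (hxd τ).le ha
    have h3 : |b * Real.sin (x τ)| ≤ b := by
      rw [abs_mul, abs_of_nonneg hb]
      calc b * |Real.sin (x τ)| ≤ b * 1 := by
            exact mul_le_mul_of_nonneg_left (Real.abs_sin_le_one (x τ)) hb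
        _ = b := mul_one b
    linarith [hp τ]
  have hylip : LipschitzWith (P + a * c + b).toNNReal y := by
    apply lipschitzWith_of_nnnorm_deriv_le (hy1.differentiable one_ne_zero)
    intro τ
    rw [← NNReal.coe_le_coe, coe_nnnorm, Real.coe_toNNReal _ hL0, Real.norm_eq_abs]
    exact hdy τ
  -- a zero of deriv x
  obtain ⟨t₀, ht₀, hslope⟩ := exists_hasDerivAt_eq_slope x (deriv x) hT
    (hx1.continuous.continuousOn) (fun τ _ => (hx1.differentiable one_ne_zero τ).hasDerivAt)
  have hxT : x T = x 0 := by simpa using hper 0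
  have hd0 : deriv x t₀ = 0 := by rw [hslope, hxT]; simp
  have hy0 : y t₀ = 0 := by rw [hy]; simp only []; rw [hd0]; exact phi_zero
  -- periodicity of y
  have hyper : Function.Periodic y T := fun τ => by
    simp only [hy]; rw [periodic_deriv hx1 hper τ]
  obtain ⟨t', ht', hyt⟩ := hyper.exists_mem_Ico₀ hT t
  have hdist : |y t' - y t₀| ≤ (P + a * c + b) * |t' - t₀| := by
    have := hylip.dist_le_mul t' t₀
    rwa [Real.dist_eq, Real.dist_eq, Real.coe_toNNReal _ hL0] at this
  have htt : |t' - t₀| ≤ T := by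
    rw [abs_le]
    constructor <;> [linarith [ht'.1, ht₀.2, ht'.2, ht₀.1]; linarith [ht'.2, ht₀.1]]
  calc |y t| = |y t' - y t₀| := by rw [← hyt, hy0, sub_zero]
    _ ≤ (P + a * c + b) * |t' - t₀| := hdist
    _ ≤ (P + a * c + b) * T := mul_le_mul_of_nonneg_left htt hL0

lemma shift_sol (hsol : IsPendSol c a b T p x) (k : ℤ) :
    IsPendSol c a b T p (fun t => x t - k * (2 * π)) := by
  obtain ⟨hper, hx1, hxd, hy1, heq⟩ := hsol
  have hd : ∀ t, deriv (fun τ => x τ - k * (2 * π)) t = deriv x t := fun t =>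
    deriv_sub_const _
  refine ⟨fun t => by simp [hper t], hx1.sub contDiff_const,
    fun t => by rw [hd t]; exact hxd t, ?_, ?_⟩
  · simp only [hd]; exact hy1
  · intro t
    simp only [hd]
    rw [(Real.sin_periodic.int_mul k).sub_eq (x t)]
    exact heq t

end facts

lemma gronwallBound_mono {δ K ε : ℝ} (hδ : 0 ≤ δ) (hK : 0 < K) (hε : 0 ≤ ε)
    {r r' : ℝ} (h : r ≤ r') : gronwallBound δ K ε r ≤ gronwallBound δ K ε r' := by
  have e : ∀ x, gronwallBound δ K ε x = δ * Real.exp (K * x) + ε / K * (Real.exp (K * x) - 1) :=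
    fun x => by rw [gronwallBound_of_K_ne_0 hK.ne']
  rw [e r, e r']
  have h1 : Real.exp (K * r) ≤ Real.exp (K * r') :=
    Real.exp_le_exp.2 (mul_le_mul_of_nonneg_left h hK.le)
  have h2 : 0 ≤ ε / K := by positivity
  nlinarith [Real.exp_pos (K * r), Real.exp_pos (K * r')]

lemma gronwallBound_nonneg {δ K ε r : ℝ} (hδ : 0 ≤ δ) (hK : 0 < K) (hε : 0 ≤ ε)
    (hr : 0 ≤ r) : 0 ≤ gronwallBound δ K ε r := by
  have h := gronwallBound_mono hδ hK hε hr
  rw [gronwallBound_x0] at h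
  exact hδ.trans h
end RelPend

open RelPend in
/-- the solvability set is closed. -/
theorem solvSet_isClosed (c a b T : ℝ) (hc : 0 < c) (ha : 0 < a) (hb : 0 < b) (hT : 0 < T)
    (p₀ : ℝ → ℝ) (hp₀cont : Continuous p₀) (hp₀per : Function.Periodic p₀ T)
    (hp₀avg : (∫ t in (0:ℝ)..T, p₀ t) = 0) :
    IsClosed (solvSet c a b T p₀) := by
  apply IsSeqClosed.isClosed
  intro sn s hmem hslim
  classical
  have hpi : (0:ℝ) < 2 * π := by positivity
  -- uniform bounds on the forcing terms
  obtain ⟨B, hB⟩ : ∃ B : ℝ, ∀ n, |sn n| ≤ B := by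
    obtain ⟨C, hC⟩ := isBounded_iff_forall_norm_le.1 hslim.cauchySeq.isBounded_range
    exact ⟨C, fun n => hC _ (mem_range_self n)⟩
  obtain ⟨P₀, hP₀⟩ : ∃ P₀ : ℝ, ∀ t, |p₀ t| ≤ P₀ := by
    obtain ⟨C, hC⟩ := isBounded_iff_forall_norm_le.1
      (hp₀per.isBounded_of_continuous hT.ne' hp₀cont)
    exact ⟨C, fun t => hC _ (mem_range_self t)⟩
  have hB0 : 0 ≤ B := le_trans (abs_nonneg _) (hB 0)
  have hP₀0 : 0 ≤ P₀ := le_trans (abs_nonneg _) (hP₀ 0)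
  set P : ℝ := P₀ + B with hPdef
  have hpb : ∀ n t, |p₀ t + sn n| ≤ P := fun n t =>
    le_trans (abs_add_le _ _) (add_le_add (hP₀ t) (hB n))
  set M : ℝ := (P + a * c + b) * T with hMdef
  have hM0 : 0 ≤ M := by
    have : 0 ≤ P := by positivity
    positivity
  -- normalized solutions
  have hex : ∀ n, ∃ x : ℝ → ℝ,
      IsPendSol c a b T (fun t => p₀ t + sn n) x ∧ x 0 ∈ Icc 0 (2 * π) := by
    intro n
    obtain ⟨x, hx⟩ := hmem n
    refine ⟨fun t => x t - (⌊x 0 / (2 * π)⌋ : ℤ) * (2 * π), shift_sol hx _, ?_, ?_⟩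
    · exact Int.sub_floor_div_mul_nonneg (x 0) hpi
    · exact (Int.sub_floor_div_mul_lt (x 0) hpi).le
  choose X hX hX0 using hex
  -- the associated curves in the phase plane
  set Y : ℕ → ℝ → ℝ := fun n t => phi c (deriv (X n) t) with hYdef
  set Z : ℕ → ℝ → ℝ × ℝ := fun n t => (X n t, Y n t) with hZdef
  have hYb : ∀ n t, |Y n t| ≤ M := fun n t =>
    sol_y_bound hc ha.le hb.le hT (hX n) (hpb n) t
  have hXc : ∀ n, Continuous (X n) := fun n => (hX n).2.1.continuous
  have hYc : ∀ n, Continuous (Y n) := fun n => (hX n).2.2.2.1.continuous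
  have hZc : ∀ n, Continuous (Z n) := fun n => (hXc n).prodMk (hYc n)
  have hZper : ∀ n, Function.Periodic (Z n) T := by
    intro n t
    have h1 : X n (t + T) = X n t := (hX n).1 t
    have h2 : Y n (t + T) = Y n t := by
      simp only [hYdef]
      rw [periodic_deriv (hX n).2.1 (hX n).1 t]
    simp only [hZdef, h1, h2]
  have hZd : ∀ n t, HasDerivAt (Z n) (vf c a b (fun τ => p₀ τ + sn n) t (Z n t)) t :=
    fun n t => sol_hasDerivAt_z hc (hX n) t
  -- compactness of initial data
  have hZK : ∀ n, Z n 0 ∈ (Icc (0:ℝ) (2 * π)) ×ˢ (Icc (-M) M) := fun n =>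
    ⟨hX0 n, abs_le.1 (hYb n 0)⟩
  obtain ⟨z₀, hz₀, φidx, hφmono, hφlim⟩ :=
    (isCompact_Icc.prod isCompact_Icc).tendsto_subseq hZK
  have hslim' : Filter.Tendsto (fun n => sn (φidx n)) Filter.atTop (nhds s) :=
    hslim.comp hφmono.tendsto_atTop
  -- Lipschitz constant
  set K : NNReal := 1 + a.toNNReal + b.toNNReal with hKdef
  have hKR : (K : ℝ) = 1 + a + b := by
    simp [hKdef, Real.coe_toNNReal a ha.le, Real.coe_toNNReal b hb.le]
  have hK0 : (0:ℝ) < (K : ℝ) := by rw [hKR]; positivity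
  -- the fundamental Gronwall estimate
  have key : ∀ n m : ℕ, ∀ t : ℝ, dist (Z n t) (Z m t)
      ≤ gronwallBound (dist (Z n 0) (Z m 0)) K (|sn n - s| + |sn m - s|) T := by
    intro n m t
    have hDper : Function.Periodic (fun τ => dist (Z n τ) (Z m τ)) T := fun τ => by
      show dist (Z n (τ + T)) (Z m (τ + T)) = dist (Z n τ) (Z m τ)
      rw [hZper n τ, hZper m τ]
    obtain ⟨t', ht', hDt⟩ := hDper.exists_mem_Ico₀ hT t
    have hgron := dist_le_of_approx_trajectories_ODE
      (v := vf c a b (fun τ => p₀ τ + s)) (K := K)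
      (f := Z n) (g := Z m)
      (f' := fun τ => vf c a b (fun τ' => p₀ τ' + sn n) τ (Z n τ))
      (g' := fun τ => vf c a b (fun τ' => p₀ τ' + sn m) τ (Z m τ))
      (εf := |sn n - s|) (εg := |sn m - s|)
      (δ := dist (Z n 0) (Z m 0)) (a := 0) (b := T)
      (fun τ => lipschitz_vf hc ha.le hb.le _ τ)
      ((hZc n).continuousOn)
      (fun τ _ => (hZd n τ).hasDerivWithinAt)
      ?_
      ((hZc m).continuousOn)
      (fun τ _ => (hZd m τ).hasDerivWithinAt)
      ?_
      le_rfl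
    · have h1 := hgron t' ⟨ht'.1, ht'.2.le⟩
      rw [hDt]
      refine h1.trans ?_
      rw [sub_zero]
      exact gronwallBound_mono dist_nonneg hK0
        (by positivity) ht'.2.le
    · -- f_bound
      intro τ _
      have : dist (vf c a b (fun τ' => p₀ τ' + sn n) τ (Z n τ))
          (vf c a b (fun τ' => p₀ τ' + s) τ (Z n τ)) = |sn n - s| := by
        rw [Prod.dist_eq]
        simp only [vf]
        rw [dist_self, Real.dist_eq]
        have : p₀ τ + sn n - a * psi c (Z n τ).2 - b * Real.sin (Z n τ).1 -
            (p₀ τ + s - a * psi c (Z n τ).2 - b * Real.sin (Z n τ).1) = sn n - s := by ring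
        rw [this]
        exact max_eq_right (abs_nonneg _)
      exact le_of_eq this
    · intro τ _
      have : dist (vf c a b (fun τ' => p₀ τ' + sn m) τ (Z m τ))
          (vf c a b (fun τ' => p₀ τ' + s) τ (Z m τ)) = |sn m - s| := by
        rw [Prod.dist_eq]
        simp only [vf]
        rw [dist_self, Real.dist_eq]
        have : p₀ τ + sn m - a * psi c (Z m τ).2 - b * Real.sin (Z m τ).1 -
            (p₀ τ + s - a * psi c (Z m τ).2 - b * Real.sin (Z m τ).1) = sn m - s := by ring
        rw [this]
        exact max_eq_right (abs_nonneg _)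
      exact le_of_eq this
  -- bounded continuous functions
  set W : ℕ → ℝ → ℝ × ℝ := fun n => Z (φidx n) with hWdef
  have hWcont : ∀ n, Continuous (W n) := fun n => hZc (φidx n)
  have hWb : ∀ n, ∃ C : ℝ, ∀ t, ‖W n t‖ ≤ C := by
    intro n
    obtain ⟨C, hC⟩ := isBounded_iff_forall_norm_le.1
      ((hZper (φidx n)).isBounded_of_continuous hT.ne' (hZc (φidx n)))
    exact ⟨C, fun t => hC _ (mem_range_self t)⟩
  choose Cb hCb using hWb
  set F : ℕ → BoundedContinuousFunction ℝ (ℝ × ℝ) := fun n =>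
    BoundedContinuousFunction.ofNormedAddCommGroup (W n) (hWcont n) (Cb n) (hCb n) with hFdef
  have hFcoe : ∀ n t, F n t = W n t := fun n t => rfl
  have hUcauchy : CauchySeq (fun n => W n 0) :=
    (show Filter.Tendsto (fun n => W n 0) Filter.atTop (nhds z₀) from hφlim).cauchySeq
  set E₁ : ℝ := Real.exp (K * T) with hE₁
  set E₂ : ℝ := (Real.exp (K * T) - 1) / K with hE₂
  have hE₁1 : 1 ≤ E₁ := Real.one_le_exp (by positivity)
  have hE₁0 : 0 < E₁ := lt_of_lt_of_le one_pos hE₁1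
  have hE₂0 : 0 ≤ E₂ := by
    rw [hE₂]
    have h := Real.one_le_exp (show (0:ℝ) ≤ K * T by positivity)
    exact div_nonneg (by linarith) hK0.le
  have hgrT : ∀ δ ε : ℝ, gronwallBound δ K ε T = δ * E₁ + ε * E₂ := by
    intro δ ε
    have e := congrFun (gronwallBound_of_K_ne_0 (δ := δ) (K := (K:ℝ)) (ε := ε) hK0.ne') T
    rw [e, hE₁, hE₂]
    ring
  have hFcauchy : CauchySeq F := by
    rw [Metric.cauchySeq_iff]
    intro ε hε
    obtain ⟨N₁, hN₁⟩ := Metric.cauchySeq_iff.1 hUcauchy (ε / (4 * E₁)) (by positivity)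
    obtain ⟨N₂, hN₂⟩ := (Metric.tendsto_atTop.1 hslim') (ε / (8 * (E₂ + 1))) (by positivity)
    refine ⟨max N₁ N₂, fun m hm n hn => ?_⟩
    have h1 : dist (W m 0) (W n 0) < ε / (4 * E₁) :=
      hN₁ m (le_trans (le_max_left _ _) hm) n (le_trans (le_max_left _ _) hn)
    have h2 : |sn (φidx m) - s| < ε / (8 * (E₂ + 1)) := by
      have := hN₂ m (le_trans (le_max_right _ _) hm); rwa [Real.dist_eq] at this
    have h3 : |sn (φidx n) - s| < ε / (8 * (E₂ + 1)) := by
      have := hN₂ n (le_trans (le_max_right _ _) hn); rwa [Real.dist_eq] at this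
    have hd : dist (F m) (F n) ≤ gronwallBound (dist (W m 0) (W n 0)) K
        (|sn (φidx m) - s| + |sn (φidx n) - s|) T := by
      rw [BoundedContinuousFunction.dist_le
        (gronwallBound_nonneg dist_nonneg hK0 (by positivity) hT.le)]
      intro t
      exact key (φidx m) (φidx n) t
    rw [hgrT] at hd
    have p1 : dist (W m 0) (W n 0) * E₁ < ε / 4 := by
      have h := mul_lt_mul_of_pos_right h1 hE₁0
      have e : ε / (4 * E₁) * E₁ = ε / 4 := by field_simp
      rw [e] at h
      exact h
    have p2 : (|sn (φidx m) - s| + |sn (φidx n) - s|) * E₂ ≤ ε / 4 := by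
      have hsum : |sn (φidx m) - s| + |sn (φidx n) - s| ≤ ε / (4 * (E₂ + 1)) := by
        have e : ε / (4 * (E₂ + 1)) = ε / (8 * (E₂ + 1)) + ε / (8 * (E₂ + 1)) := by
          field_simp; ring
        rw [e]; linarith
      have h := mul_le_mul_of_nonneg_right hsum hE₂0
      have h4 : ε / (4 * (E₂ + 1)) * E₂ ≤ ε / 4 := by
        rw [div_mul_eq_mul_div, div_le_div_iff₀ (by positivity) (by positivity)]
        nlinarith [hε.le, hE₂0]
      linarith
    linarith
  -- pass to the limit
  obtain ⟨Flim, hFlim⟩ := cauchySeq_tendsto_of_complete hFcauchy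
  have hunif := BoundedContinuousFunction.tendsto_iff_tendstoUniformly.1 hFlim
  have hpt : ∀ t, Filter.Tendsto (fun n => W n t) Filter.atTop (nhds (Flim t)) :=
    fun t => hunif.tendsto_at t
  set x : ℝ → ℝ := fun t => (Flim t).1 with hxdef
  set y : ℝ → ℝ := fun t => (Flim t).2 with hydef
  have hxpt : ∀ t, Filter.Tendsto (fun n => X (φidx n) t) Filter.atTop (nhds (x t)) :=
    fun t => (continuous_fst.tendsto _).comp (hpt t)
  have hypt : ∀ t, Filter.Tendsto (fun n => Y (φidx n) t) Filter.atTop (nhds (y t)) :=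
    fun t => (continuous_snd.tendsto _).comp (hpt t)
  have hxc : Continuous x := continuous_fst.comp Flim.continuous
  have hyc : Continuous y := continuous_snd.comp Flim.continuous
  have hxper : Function.Periodic x T := by
    intro t
    have e : (fun n => X (φidx n) (t + T)) = fun n => X (φidx n) t :=
      funext fun n => (hX (φidx n)).1 t
    exact tendsto_nhds_unique (e ▸ hxpt (t + T)) (hxpt t)
  -- FTC for the approximating solutions
  have hXderiv : ∀ j τ, HasDerivAt (X j) (psi c (Y j τ)) τ := by
    intro j τ
    have e : psi c (Y j τ) = deriv (X j) τ := psi_phi hc ((hX j).2.2.1 τ)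
    rw [e]
    exact ((hX j).2.1.differentiable one_ne_zero τ).hasDerivAt
  have hYderiv : ∀ j τ, HasDerivAt (Y j)
      (p₀ τ + sn j - a * psi c (Y j τ) - b * Real.sin (X j τ)) τ := by
    intro j τ
    have h := ((hX j).2.2.2.1.differentiable one_ne_zero τ).hasDerivAt
    have e2 : deriv (fun τ' => phi c (deriv (X j) τ')) τ
        = p₀ τ + sn j - a * psi c (Y j τ) - b * Real.sin (X j τ) := by
      have heq : deriv (fun τ' => phi c (deriv (X j) τ')) τ + a * deriv (X j) τ
          + b * Real.sin (X j τ) = p₀ τ + sn j := (hX j).2.2.2.2 τ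
      have e1 : psi c (Y j τ) = deriv (X j) τ := psi_phi hc ((hX j).2.2.1 τ)
      rw [e1]; linarith
    exact e2 ▸ h
  have hFTC1 : ∀ j t, X j t - X j 0 = ∫ τ in (0:ℝ)..t, psi c (Y j τ) := fun j t =>
    (intervalIntegral.integral_eq_sub_of_hasDerivAt (fun τ _ => hXderiv j τ)
      (Continuous.intervalIntegrable ((continuous_psi hc).comp (hYc j)) 0 t)).symm
  have hFTC2 : ∀ j t, Y j t - Y j 0
      = ∫ τ in (0:ℝ)..t, (p₀ τ + sn j - a * psi c (Y j τ) - b * Real.sin (X j τ)) := by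
    intro j t
    refine (intervalIntegral.integral_eq_sub_of_hasDerivAt (fun τ _ => hYderiv j τ)
      (Continuous.intervalIntegrable ?_ 0 t)).symm
    exact ((hp₀cont.add continuous_const).sub
      (continuous_const.mul ((continuous_psi hc).comp (hYc j)))).sub
      (continuous_const.mul (Real.continuous_sin.comp (hXc j)))
  -- integral identities for the limit
  have hxeq : ∀ t, x t = x 0 + ∫ τ in (0:ℝ)..t, psi c (y τ) := by
    intro t
    have hi : Filter.Tendsto (fun n => ∫ τ in (0:ℝ)..t, psi c (Y (φidx n) τ))
        Filter.atTop (nhds (∫ τ in (0:ℝ)..t, psi c (y τ))) := by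
      apply intervalIntegral.tendsto_integral_filter_of_dominated_convergence
        (bound := fun _ => c)
      · exact Filter.Eventually.of_forall fun n =>
          ((continuous_psi hc).comp (hYc (φidx n))).aestronglyMeasurable
      · exact Filter.Eventually.of_forall fun n => (ae_of_all _ fun τ _ => by
          rw [Real.norm_eq_abs]; exact (abs_psi_lt hc _).le)
      · exact intervalIntegrable_const
      · exact ae_of_all _ fun τ _ => ((continuous_psi hc).tendsto _).comp (hypt τ)
    have hl : Filter.Tendsto (fun n => X (φidx n) t - X (φidx n) 0)
        Filter.atTop (nhds (x t - x 0)) := (hxpt t).sub (hxpt 0)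
    have e : (fun n => X (φidx n) t - X (φidx n) 0)
        = fun n => ∫ τ in (0:ℝ)..t, psi c (Y (φidx n) τ) :=
      funext fun n => hFTC1 (φidx n) t
    rw [e] at hl
    have h := tendsto_nhds_unique hl hi
    linarith
  have hyeq : ∀ t, y t = y 0
      + ∫ τ in (0:ℝ)..t, (p₀ τ + s - a * psi c (y τ) - b * Real.sin (x τ)) := by
    intro t
    have hi : Filter.Tendsto
        (fun n => ∫ τ in (0:ℝ)..t,
          (p₀ τ + sn (φidx n) - a * psi c (Y (φidx n) τ) - b * Real.sin (X (φidx n) τ)))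
        Filter.atTop
        (nhds (∫ τ in (0:ℝ)..t, (p₀ τ + s - a * psi c (y τ) - b * Real.sin (x τ)))) := by
      apply intervalIntegral.tendsto_integral_filter_of_dominated_convergence
        (bound := fun _ => P + a * c + b)
      · refine Filter.Eventually.of_forall fun n => Continuous.aestronglyMeasurable ?_
        exact ((hp₀cont.add continuous_const).sub
          (continuous_const.mul ((continuous_psi hc).comp (hYc (φidx n))))).sub
          (continuous_const.mul (Real.continuous_sin.comp (hXc (φidx n))))
      · refine Filter.Eventually.of_forall fun n => (ae_of_all _ fun τ _ => ?_)
        rw [Real.norm_eq_abs]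
        have h1 : |p₀ τ + sn (φidx n) - a * psi c (Y (φidx n) τ)
            - b * Real.sin (X (φidx n) τ)|
            ≤ |p₀ τ + sn (φidx n)| + |a * psi c (Y (φidx n) τ)|
              + |b * Real.sin (X (φidx n) τ)| := by
          calc |p₀ τ + sn (φidx n) - a * psi c (Y (φidx n) τ) - b * Real.sin (X (φidx n) τ)|
              ≤ |p₀ τ + sn (φidx n) - a * psi c (Y (φidx n) τ)|
                + |b * Real.sin (X (φidx n) τ)| := abs_sub _ _
            _ ≤ _ := by linarith [abs_sub (p₀ τ + sn (φidx n)) (a * psi c (Y (φidx n) τ))]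
        have h2 : |a * psi c (Y (φidx n) τ)| ≤ a * c := by
          rw [abs_mul, abs_of_nonneg ha.le]
          exact mul_le_mul_of_nonneg_left (abs_psi_lt hc _).le ha.le
        have h3 : |b * Real.sin (X (φidx n) τ)| ≤ b := by
          rw [abs_mul, abs_of_nonneg hb.le]
          calc b * |Real.sin (X (φidx n) τ)| ≤ b * 1 :=
                mul_le_mul_of_nonneg_left (Real.abs_sin_le_one _) hb.le
            _ = b := mul_one b
        linarith [hpb (φidx n) τ]
      · exact intervalIntegrable_const
      · refine ae_of_all _ fun τ _ => ?_
        have t1 : Filter.Tendsto (fun n => a * psi c (Y (φidx n) τ)) Filter.atTop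
            (nhds (a * psi c (y τ))) :=
          (((continuous_psi hc).tendsto _).comp (hypt τ)).const_mul a
        have t2 : Filter.Tendsto (fun n => b * Real.sin (X (φidx n) τ)) Filter.atTop
            (nhds (b * Real.sin (x τ))) :=
          ((Real.continuous_sin.tendsto _).comp (hxpt τ)).const_mul b
        exact ((tendsto_const_nhds.add hslim').sub t1).sub t2
    have hl : Filter.Tendsto (fun n => Y (φidx n) t - Y (φidx n) 0)
        Filter.atTop (nhds (y t - y 0)) := (hypt t).sub (hypt 0)
    have e : (fun n => Y (φidx n) t - Y (φidx n) 0)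
        = fun n => ∫ τ in (0:ℝ)..t,
          (p₀ τ + sn (φidx n) - a * psi c (Y (φidx n) τ) - b * Real.sin (X (φidx n) τ)) :=
      funext fun n => hFTC2 (φidx n) t
    rw [e] at hl
    have h := tendsto_nhds_unique hl hi
    linarith
  -- differentiability of the limit
  have hg1c : Continuous fun τ => psi c (y τ) := (continuous_psi hc).comp hyc
  have hg2c : Continuous fun τ => p₀ τ + s - a * psi c (y τ) - b * Real.sin (x τ) :=
    ((hp₀cont.add continuous_const).sub
      (continuous_const.mul ((continuous_psi hc).comp hyc))).sub
      (continuous_const.mul (Real.continuous_sin.comp hxc))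
  have hxfun : x = fun t => x 0 + ∫ τ in (0:ℝ)..t, psi c (y τ) := funext hxeq
  have hyfun : y = fun t => y 0
      + ∫ τ in (0:ℝ)..t, (p₀ τ + s - a * psi c (y τ) - b * Real.sin (x τ)) := funext hyeq
  have hxd' : ∀ t, HasDerivAt x (psi c (y t)) t := by
    intro t
    have h := ((hg1c.integral_hasStrictDerivAt 0 t).hasDerivAt).const_add (x 0)
    rw [← hxfun] at h
    exact h
  have hyd' : ∀ t, HasDerivAt y (p₀ t + s - a * psi c (y t) - b * Real.sin (x t)) t := by
    intro t
    have h := ((hg2c.integral_hasStrictDerivAt 0 t).hasDerivAt).const_add (y 0)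
    rw [← hyfun] at h
    exact h
  -- assembly
  have hderivx : deriv x = fun t => psi c (y t) := funext fun t => (hxd' t).deriv
  have hderivy : deriv y = fun t => p₀ t + s - a * psi c (y t) - b * Real.sin (x t) :=
    funext fun t => (hyd' t).deriv
  have hx1 : ContDiff ℝ 1 x := contDiff_one_iff_deriv.2
    ⟨fun t => (hxd' t).differentiableAt, by rw [hderivx]; exact hg1c⟩
  have hy1 : ContDiff ℝ 1 y := contDiff_one_iff_deriv.2
    ⟨fun t => (hyd' t).differentiableAt, by rw [hderivy]; exact hg2c⟩
  have hlt : ∀ t, |deriv x t| < c := fun t => by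
    rw [hderivx]; exact abs_psi_lt hc _
  have hyphi : (fun t => phi c (deriv x t)) = y := by
    funext t
    rw [hderivx]
    exact phi_psi hc _
  refine ⟨x, hxper, hx1, hlt, ?_, ?_⟩
  · rw [hyphi]; exact hy1
  · intro t
    rw [hyphi]
    simp only [hderivy, hderivx]
    ring
end

section
/- For every r ∈ ℝ there exists a solution of the integro-differential Dirichlet problem on [0, T]: a continuously differentiable x : [0, T] → ℝ with |x'(t)| < c for all t, such that t ↦ φ(x'(t)) is continuously differentiable on [0, T], x(0) = x(T) = r, and (φ(x'(t)))' + a·x'(t) + b·sin(x(t)) = p₀(t) + (b/T)·∫₀ᵀ sin(x(τ)) dτ for all t ∈ [0, T]. -/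
open Real Set MeasureTheory
open scoped NNReal

noncomputable def psi (c y : ℝ) : ℝ := c * y / Real.sqrt (c^2 + y^2)

section psi
variable {c : ℝ} (hc : 0 < c)
include hc

private lemma sq_add_pos (y : ℝ) : 0 < c^2 + y^2 := by positivity

private lemma sqrt_pos' (y : ℝ) : 0 < Real.sqrt (c^2 + y^2) :=
  Real.sqrt_pos.2 (sq_add_pos hc y)

private lemma sqrt_sq' (y : ℝ) : (Real.sqrt (c^2 + y^2))^2 = c^2 + y^2 :=
  Real.sq_sqrt (le_of_lt (sq_add_pos hc y))

private lemma c_le_sqrt (y : ℝ) : c ≤ Real.sqrt (c^2 + y^2) := by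
  have h := Real.sqrt_le_sqrt (show c^2 ≤ c^2 + y^2 by nlinarith)
  rwa [Real.sqrt_sq (le_of_lt hc)] at h

lemma psi_abs_lt (y : ℝ) : |psi c y| < c := by
  have hg := sqrt_pos' hc y
  have hgsq := sqrt_sq' hc y
  rw [psi, abs_div, abs_of_pos hg, div_lt_iff₀ hg, abs_mul, abs_of_pos hc]
  have : |y| < Real.sqrt (c^2 + y^2) := by
    rw [show |y| = Real.sqrt (y^2) by rw [Real.sqrt_sq_eq_abs]]
    apply Real.sqrt_lt_sqrt (sq_nonneg y)
    nlinarith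
  nlinarith

lemma psi_abs_le (y : ℝ) : |psi c y| ≤ c := le_of_lt (psi_abs_lt hc y)

lemma phi_psi (y : ℝ) : phi c (psi c y) = y := by
  have hg := sqrt_pos' hc y
  have hgsq := sqrt_sq' hc y
  have hkey : 1 - (psi c y)^2 / c^2 = (c / Real.sqrt (c^2 + y^2))^2 := by
    rw [psi]
    field_simp
    nlinarith
  rw [phi, hkey, Real.sqrt_sq (by positivity)]
  rw [psi]
  field_simp

lemma psi_nonneg {y : ℝ} (hy : 0 ≤ y) : 0 ≤ psi c y := by
  have hg := sqrt_pos' hc y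
  rw [psi]; positivity

lemma psi_nonpos {y : ℝ} (hy : y ≤ 0) : psi c y ≤ 0 := by
  have hg := sqrt_pos' hc y
  rw [psi, div_nonpos_iff]
  right
  exact ⟨by nlinarith, le_of_lt hg⟩

lemma hasDerivAt_psi (y : ℝ) :
    HasDerivAt (psi c) (c^3 / (Real.sqrt (c^2 + y^2))^3) y := by
  have hg := sqrt_pos' hc y
  have hgsq := sqrt_sq' hc y
  have h1 : HasDerivAt (fun y : ℝ => c^2 + y^2) (2*y) y := by
    simpa using ((hasDerivAt_pow 2 y).const_add (c^2))
  have h2 : HasDerivAt (fun y : ℝ => Real.sqrt (c^2 + y^2))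
      (1 / (2 * Real.sqrt (c^2 + y^2)) * (2*y)) y :=
    (Real.hasDerivAt_sqrt (ne_of_gt (sq_add_pos hc y))).comp y h1
  have h3 : HasDerivAt (fun y : ℝ => c * y) c y := by
    simpa using (hasDerivAt_id y).const_mul c
  have h4 := h3.div h2 (ne_of_gt hg)
  refine h4.congr_deriv ?_
  symm
  rw [div_eq_div_iff (by positivity) (by positivity)]
  field_simp
  linear_combination (-1 : ℝ) * hgsq

lemma psi_differentiable : Differentiable ℝ (psi c) :=
  fun y => (hasDerivAt_psi hc y).differentiableAt

lemma psi_deriv (y : ℝ) : deriv (psi c) y = c^3 / (Real.sqrt (c^2 + y^2))^3 :=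
  (hasDerivAt_psi hc y).deriv

lemma psi_lipschitz : LipschitzWith 1 (psi c) := by
  apply lipschitzWith_of_nnnorm_deriv_le (psi_differentiable hc)
  intro y
  have hg := sqrt_pos' hc y
  have hcg := c_le_sqrt hc y
  have hbound : ‖deriv (psi c) y‖ ≤ 1 := by
    rw [psi_deriv hc, Real.norm_eq_abs, abs_of_pos (by positivity)]
    rw [div_le_one (by positivity)]
    exact pow_le_pow_left₀ (le_of_lt hc) hcg 3
  rwa [← NNReal.coe_le_coe, coe_nnnorm, NNReal.coe_one]

lemma psi_continuous : Continuous (psi c) := (psi_differentiable hc).continuous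

end psi

/-! ### Elementary integer helpers -/

private lemma int_zero_of_pi {m : ℤ} (h1 : 2*(m:ℝ)*π ≤ π/2) (h2 : -(3*π/2) ≤ 2*(m:ℝ)*π) :
    m = 0 := by
  have hπ := Real.pi_pos
  by_contra hm
  rcases lt_or_gt_of_ne hm with hlt | hgt
  · have hle : m ≤ -1 := by omega
    have : (m:ℝ) ≤ -1 := by exact_mod_cast hle
    nlinarith
  · have hle : (1:ℤ) ≤ m := by omega
    have : (1:ℝ) ≤ (m:ℝ) := by exact_mod_cast hle
    nlinarith

private lemma int_one_of_pi {m : ℤ} (h1 : 2*(m:ℝ)*π ≤ 5*π/2) (h2 : π/2 ≤ 2*(m:ℝ)*π) :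
    m = 1 := by
  have hπ := Real.pi_pos
  by_contra hm
  rcases lt_or_gt_of_ne hm with hlt | hgt
  · have hle : m ≤ 0 := by omega
    have : (m:ℝ) ≤ 0 := by exact_mod_cast hle
    nlinarith
  · have hle : (2:ℤ) ≤ m := by omega
    have : (2:ℝ) ≤ (m:ℝ) := by exact_mod_cast hle
    nlinarith

/-! ### Trapping the argument of a nonvanishing map on a connected set -/

private lemma cos_trap {y : ℝ} (h : 0 ≤ Real.cos y) :
    ∃ k : ℤ, |y - 2 * k * π| ≤ π / 2 := by
  have hπ := Real.pi_pos
  refine ⟨round (y / (2 * π)), ?_⟩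
  set k := round (y / (2 * π)) with hk
  have h1 : |y / (2*π) - k| ≤ 1/2 := abs_sub_round _
  have h2 : |y - 2*k*π| ≤ π := by
    have h2π : (0:ℝ) < 2*π := by positivity
    have : y - 2*k*π = (2*π) * (y / (2*π) - k) := by field_simp
    rw [this, abs_mul, abs_of_pos h2π]
    nlinarith [abs_nonneg (y / (2*π) - (k:ℝ))]
  by_contra hcon
  push_neg at hcon
  set z := y - 2*k*π with hz
  have hcz : Real.cos z = Real.cos y := by
    have : z + (k:ℤ) * (2*π) = y := by push_cast [hz]; ring
    rw [← this, Real.cos_add_int_mul_two_pi]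
  rcases le_or_gt 0 z with hz0 | hz0
  · have : Real.cos z < 0 := by
      apply Real.cos_neg_of_pi_div_two_lt_of_lt
      · rwa [abs_of_nonneg hz0] at hcon
      · rw [abs_of_nonneg hz0] at h2; linarith
    linarith [hcz ▸ this]
  · have hzneg : π/2 < -z := by rwa [abs_of_neg hz0] at hcon
    have hzle : -z ≤ π := by rw [abs_of_neg hz0] at h2; linarith
    have : Real.cos (-z) < 0 := by
      apply Real.cos_neg_of_pi_div_two_lt_of_lt hzneg; linarith
    rw [Real.cos_neg] at this
    linarith [hcz ▸ this]

private lemma edge_trap_aux {s : Set (ℝ×ℝ)} (hs : IsPreconnected s) {θ : ℝ×ℝ → ℝ}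
    (hθ : ContinuousOn θ s) (h : ∀ p ∈ s, 0 ≤ Real.cos (θ p))
    {p q : ℝ×ℝ} (hp : p ∈ s) (hq : q ∈ s) {kp kq : ℤ}
    (hkp : |θ p - 2*kp*π| ≤ π/2) (hkq : |θ q - 2*kq*π| ≤ π/2) (hlt : kp < kq) : False := by
  have hπ := Real.pi_pos
  obtain ⟨hp1, hp2⟩ := abs_le.1 hkp
  obtain ⟨hq1, hq2⟩ := abs_le.1 hkq
  have hkk : (kp:ℝ) + 1 ≤ kq := by exact_mod_cast hlt
  have hc1 : θ p ≤ 2*kp*π + π := by linarith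
  have hc2 : 2*kp*π + π ≤ θ q := by nlinarith
  have hmem : (2*kp*π + π) ∈ Icc (θ p) (θ q) := ⟨hc1, hc2⟩
  obtain ⟨z, hz, hzv⟩ := hs.intermediate_value hp hq hθ hmem
  have : Real.cos (θ z) = -1 := by
    rw [hzv]
    have : 2*(kp:ℝ)*π + π = π + (kp:ℤ) * (2*π) := by push_cast; ring
    rw [this, Real.cos_add_int_mul_two_pi, Real.cos_pi]
  have := h z hz
  linarith

private lemma edge_trap {s : Set (ℝ×ℝ)} (hs : IsPreconnected s) {θ : ℝ×ℝ → ℝ}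
    (hθ : ContinuousOn θ s) (h : ∀ p ∈ s, 0 ≤ Real.cos (θ p))
    {p q : ℝ×ℝ} (hp : p ∈ s) (hq : q ∈ s) :
    ∃ k : ℤ, |θ p - 2*k*π| ≤ π/2 ∧ |θ q - 2*k*π| ≤ π/2 := by
  obtain ⟨kp, hkp⟩ := cos_trap (h p hp)
  obtain ⟨kq, hkq⟩ := cos_trap (h q hq)
  rcases lt_trichotomy kp kq with hlt | heq | hlt
  · exact absurd (edge_trap_aux hs hθ h hp hq hkp hkq hlt) not_false
  · exact ⟨kp, hkp, heq ▸ hkq⟩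
  · exact absurd (edge_trap_aux hs hθ h hq hp hkq hkp hlt) not_false

/-! ### A global continuous logarithm on a compact convex set -/

private lemma exists_clog {Q : Set (ℝ×ℝ)} (hQc : IsCompact Q) (hconv : Convex ℝ Q)
    {G : ℝ×ℝ → ℂ} (hG : ContinuousOn G Q) (h0 : ∀ p ∈ Q, G p ≠ 0) :
    ∃ L : ℝ×ℝ → ℂ, ContinuousOn L Q ∧ ∀ p ∈ Q, Complex.exp (L p) = G p := by
  rcases Q.eq_empty_or_nonempty with rfl | ⟨q₀, hq₀⟩
  · exact ⟨0, continuousOn_empty _, by simp⟩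
  obtain ⟨pm, hpm, hmin⟩ := hQc.exists_isMinOn ⟨q₀, hq₀⟩ hG.norm
  set m : ℝ := ‖G pm‖ with hm
  have hm0 : 0 < m := norm_pos_iff.2 (h0 pm hpm)
  have hmle : ∀ p ∈ Q, m ≤ ‖G p‖ := fun p hp => hmin hp
  obtain ⟨δ, hδ0, hδ⟩ := Metric.uniformContinuousOn_iff.1
    (hQc.uniformContinuousOn_of_continuous hG) m hm0
  obtain ⟨D, hD⟩ := hQc.isBounded.subset_closedBall q₀
  have hD0 : 0 ≤ D := by
    have := hD hq₀; simpa [Metric.mem_closedBall] using this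
  obtain ⟨n, hn⟩ := exists_nat_gt (D / δ)
  have hn0 : 0 < (n:ℝ) := lt_of_le_of_lt (by positivity) hn
  set seg : ℝ×ℝ → ℕ → ℝ×ℝ := fun p k => q₀ + ((k:ℝ)/(n:ℝ)) • (p - q₀) with hsegdef
  have hseg_mem : ∀ p ∈ Q, ∀ k : ℕ, k ≤ n → seg p k ∈ Q := by
    intro p hp k hk
    have hk0 : (0:ℝ) ≤ (k:ℝ)/(n:ℝ) := by positivity
    have hk1 : (k:ℝ)/(n:ℝ) ≤ 1 := by
      rw [div_le_one hn0]; exact_mod_cast hk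
    have : seg p k = (1 - (k:ℝ)/(n:ℝ)) • q₀ + ((k:ℝ)/(n:ℝ)) • p := by
      simp only [hsegdef, smul_sub, sub_smul, one_smul]; abel
    rw [this]
    exact hconv hq₀ hp (by linarith) hk0 (by ring)
  have hseg_cont : ∀ k : ℕ, Continuous fun p => seg p k := by
    intro k; fun_prop
  have hseg_dist : ∀ p ∈ Q, ∀ k : ℕ, dist (seg p (k+1)) (seg p k) < δ := by
    intro p hp k
    have : seg p (k+1) - seg p k = ((1:ℝ)/(n:ℝ)) • (p - q₀) := by
      simp only [hsegdef]
      rw [add_sub_add_left_eq_sub, ← sub_smul]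
      congr 1
      push_cast
      field_simp
      ring
    rw [dist_eq_norm, this, norm_smul]
    have hpq : ‖p - q₀‖ ≤ D := by
      have := hD hp; rw [Metric.mem_closedBall, dist_eq_norm] at this; exact this
    have h1n : ‖(1:ℝ)/(n:ℝ)‖ = 1/(n:ℝ) := by
      rw [Real.norm_eq_abs, abs_of_pos (by positivity)]
    rw [h1n]
    calc 1/(n:ℝ) * ‖p - q₀‖ ≤ 1/(n:ℝ) * D := by
          apply mul_le_mul_of_nonneg_left hpq (by positivity)
      _ < δ := by
          rw [div_mul_eq_mul_div, one_mul, div_lt_iff₀ hn0]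
          rw [div_lt_iff₀ hδ0] at hn
          linarith [hn]
  have hratio : ∀ p ∈ Q, ∀ k : ℕ, k < n →
      ‖G (seg p (k+1)) / G (seg p k) - 1‖ < 1 := by
    intro p hp k hk
    have hk1 : seg p (k+1) ∈ Q := hseg_mem p hp (k+1) hk
    have hk2 : seg p k ∈ Q := hseg_mem p hp k (le_of_lt hk)
    have hne : G (seg p k) ≠ 0 := h0 _ hk2
    have : G (seg p (k+1)) / G (seg p k) - 1 = (G (seg p (k+1)) - G (seg p k)) / G (seg p k) := by
      field_simp
    rw [this, norm_div]
    have hnum : ‖G (seg p (k+1)) - G (seg p k)‖ < m := by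
      have := hδ _ hk1 _ hk2 (hseg_dist p hp k)
      rwa [dist_eq_norm] at this
    have hden : m ≤ ‖G (seg p k)‖ := hmle _ hk2
    rw [div_lt_one (lt_of_lt_of_le hm0 hden)]
    linarith
  have hslit : ∀ p ∈ Q, ∀ k : ℕ, k < n →
      G (seg p (k+1)) / G (seg p k) ∈ Complex.slitPlane := by
    intro p hp k hk
    rw [Complex.mem_slitPlane_iff]
    left
    have h1 := hratio p hp k hk
    have habs : |(G (seg p (k+1)) / G (seg p k) - 1).re| ≤
        ‖G (seg p (k+1)) / G (seg p k) - 1‖ := Complex.abs_re_le_norm _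
    have h2 := (abs_le.1 (habs.trans (le_of_lt h1))).1
    simp only [Complex.sub_re, Complex.one_re] at h2
    have h3 : (G (seg p (k+1)) / G (seg p k)).re - 1 > -1 := by
      have h4 := abs_le.1 habs
      have := h4.1
      simp only [Complex.sub_re, Complex.one_re] at this
      linarith
    linarith
  refine ⟨fun p => Complex.log (G q₀) +
    ∑ k ∈ Finset.range n, Complex.log (G (seg p (k+1)) / G (seg p k)), ?_, ?_⟩
  · apply ContinuousOn.add continuousOn_const
    apply continuousOn_finset_sum
    intro k hk
    rw [Finset.mem_range] at hk
    have h1 : ContinuousOn (fun p => G (seg p (k+1))) Q :=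
      hG.comp (hseg_cont (k+1)).continuousOn (fun p hp => hseg_mem p hp (k+1) hk)
    have h2 : ContinuousOn (fun p => G (seg p k)) Q :=
      hG.comp (hseg_cont k).continuousOn (fun p hp => hseg_mem p hp k (le_of_lt hk))
    exact ContinuousOn.clog (h1.div h2 (fun p hp => h0 _ (hseg_mem p hp k (le_of_lt hk))))
      (fun p hp => hslit p hp k hk)
  · intro p hp
    have key : ∀ j : ℕ, j ≤ n → Complex.exp (Complex.log (G q₀) +
        ∑ k ∈ Finset.range j, Complex.log (G (seg p (k+1)) / G (seg p k))) = G (seg p j) := by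
      intro j
      induction j with
      | zero =>
        intro _
        simp only [Finset.range_zero, Finset.sum_empty, add_zero]
        rw [Complex.exp_log (h0 q₀ hq₀)]
        simp [hsegdef]
      | succ j ih =>
        intro hj
        have hjn : j < n := hj
        rw [Finset.sum_range_succ, ← add_assoc, Complex.exp_add, ih (le_of_lt hjn),
          Complex.exp_log (div_ne_zero (h0 _ (hseg_mem p hp (j+1) hj))
            (h0 _ (hseg_mem p hp j (le_of_lt hjn))))]
        rw [mul_div_cancel₀]
        exact h0 _ (hseg_mem p hp j (le_of_lt hjn))
    have := key n le_rfl
    rwa [show seg p n = p by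
      simp only [hsegdef]
      rw [div_self (ne_of_gt hn0), one_smul]
      abel] at this

/-! ### Poincaré–Miranda theorem in dimension 2 -/

theorem poincare_miranda {a₁ b₁ a₂ b₂ : ℝ} (h₁ : a₁ ≤ b₁) (h₂ : a₂ ≤ b₂) {f g : ℝ × ℝ → ℝ}
    (hf : ContinuousOn f (Icc a₁ b₁ ×ˢ Icc a₂ b₂))
    (hg : ContinuousOn g (Icc a₁ b₁ ×ˢ Icc a₂ b₂))
    (hfl : ∀ y ∈ Icc a₂ b₂, f (a₁, y) ≤ 0) (hfr : ∀ y ∈ Icc a₂ b₂, 0 ≤ f (b₁, y))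
    (hgb : ∀ x ∈ Icc a₁ b₁, g (x, a₂) ≤ 0) (hgt : ∀ x ∈ Icc a₁ b₁, 0 ≤ g (x, b₂)) :
    ∃ p ∈ Icc a₁ b₁ ×ˢ Icc a₂ b₂, f p = 0 ∧ g p = 0 := by
  by_contra hcon
  push_neg at hcon
  set Q : Set (ℝ×ℝ) := Icc a₁ b₁ ×ˢ Icc a₂ b₂ with hQdef
  have hQc : IsCompact Q := isCompact_Icc.prod isCompact_Icc
  have hconv : Convex ℝ Q := (convex_Icc _ _).prod (convex_Icc _ _)
  set G : ℝ×ℝ → ℂ := fun p => (f p : ℂ) + (g p : ℂ) * Complex.I with hGdef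
  have hGre : ∀ p, (G p).re = f p := by intro p; simp [hGdef]
  have hGim : ∀ p, (G p).im = g p := by intro p; simp [hGdef]
  have hGc : ContinuousOn G Q := by
    apply ContinuousOn.add
    · exact Complex.continuous_ofReal.comp_continuousOn hf
    · exact (Complex.continuous_ofReal.comp_continuousOn hg).mul continuousOn_const
  have h0 : ∀ p ∈ Q, G p ≠ 0 := by
    intro p hp hzero
    have h1 : f p = 0 := by rw [← hGre p, hzero]; simp
    have h2 : g p = 0 := by rw [← hGim p, hzero]; simp
    exact hcon p hp h1 h2
  obtain ⟨L, hLc, hLe⟩ := exists_clog hQc hconv hGc h0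
  set θ : ℝ×ℝ → ℝ := fun p => (L p).im with hθdef
  have hθc : ContinuousOn θ Q := Complex.continuous_im.comp_continuousOn hLc
  have hfcos : ∀ p ∈ Q, f p = Real.exp ((L p).re) * Real.cos (θ p) := by
    intro p hp
    rw [← hGre p, ← hLe p hp, Complex.exp_re]
  have hgsin : ∀ p ∈ Q, g p = Real.exp ((L p).re) * Real.sin (θ p) := by
    intro p hp
    rw [← hGim p, ← hLe p hp, Complex.exp_im]
  have hsubB : Icc a₁ b₁ ×ˢ ({a₂} : Set ℝ) ⊆ Q := by
    apply prod_mono_right; simp [singleton_subset_iff, h₂, le_refl]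
  have hsubT : Icc a₁ b₁ ×ˢ ({b₂} : Set ℝ) ⊆ Q := by
    apply prod_mono_right; simp [singleton_subset_iff, h₂, le_refl]
  have hsubL : ({a₁} : Set ℝ) ×ˢ Icc a₂ b₂ ⊆ Q := by
    apply prod_mono_left; simp [singleton_subset_iff, h₁, le_refl]
  have hsubR : ({b₁} : Set ℝ) ×ˢ Icc a₂ b₂ ⊆ Q := by
    apply prod_mono_left; simp [singleton_subset_iff, h₁, le_refl]
  have hπ := Real.pi_pos
  have hBLB : ((a₁, a₂) : ℝ×ℝ) ∈ Icc a₁ b₁ ×ˢ ({a₂} : Set ℝ) := ⟨by simp [h₁], mem_singleton _⟩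
  have hBRB : ((b₁, a₂) : ℝ×ℝ) ∈ Icc a₁ b₁ ×ˢ ({a₂} : Set ℝ) := ⟨by simp [h₁], mem_singleton _⟩
  have hBRR : ((b₁, a₂) : ℝ×ℝ) ∈ ({b₁} : Set ℝ) ×ˢ Icc a₂ b₂ := ⟨mem_singleton _, by simp [h₂]⟩
  have hTRR : ((b₁, b₂) : ℝ×ℝ) ∈ ({b₁} : Set ℝ) ×ˢ Icc a₂ b₂ := ⟨mem_singleton _, by simp [h₂]⟩
  have hTRT : ((b₁, b₂) : ℝ×ℝ) ∈ Icc a₁ b₁ ×ˢ ({b₂} : Set ℝ) := ⟨by simp [h₁], mem_singleton _⟩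
  have hTLT : ((a₁, b₂) : ℝ×ℝ) ∈ Icc a₁ b₁ ×ˢ ({b₂} : Set ℝ) := ⟨by simp [h₁], mem_singleton _⟩
  have hTLL : ((a₁, b₂) : ℝ×ℝ) ∈ ({a₁} : Set ℝ) ×ˢ Icc a₂ b₂ := ⟨mem_singleton _, by simp [h₂]⟩
  have hBLL : ((a₁, a₂) : ℝ×ℝ) ∈ ({a₁} : Set ℝ) ×ˢ Icc a₂ b₂ := ⟨mem_singleton _, by simp [h₂]⟩
  obtain ⟨k₂, hk₂a, hk₂b⟩ := edge_trap (θ := θ)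
    (isPreconnected_singleton.prod isPreconnected_Icc) (hθc.mono hsubR)
    (by
      rintro ⟨x, y⟩ hp
      have hx : x = b₁ := hp.1
      subst hx
      have h1 := hfr y hp.2
      rw [hfcos _ (hsubR hp)] at h1
      nlinarith [Real.exp_pos ((L (x, y)).re)])
    hBRR hTRR
  obtain ⟨k₁, hk₁a, hk₁b⟩ := edge_trap (θ := fun p => θ p + π/2)
    (isPreconnected_Icc.prod isPreconnected_singleton)
    ((hθc.mono hsubB).add continuousOn_const)
    (by
      rintro ⟨x, y⟩ hp
      have hy : y = a₂ := hp.2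
      subst hy
      have h1 := hgb x hp.1
      rw [hgsin _ (hsubB hp)] at h1
      rw [Real.cos_add_pi_div_two]
      nlinarith [Real.exp_pos ((L (x, y)).re)])
    hBLB hBRB
  obtain ⟨k₃, hk₃a, hk₃b⟩ := edge_trap (θ := fun p => θ p - π/2)
    (isPreconnected_Icc.prod isPreconnected_singleton)
    ((hθc.mono hsubT).sub continuousOn_const)
    (by
      rintro ⟨x, y⟩ hp
      have hy : y = b₂ := hp.2
      subst hy
      have h1 := hgt x hp.1
      rw [hgsin _ (hsubT hp)] at h1
      have heq : Real.cos (θ (x, y) - π/2) = Real.sin (θ (x, y)) := by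
        rw [← Real.cos_neg, neg_sub, Real.cos_pi_div_two_sub]
      rw [heq]
      nlinarith [Real.exp_pos ((L (x, y)).re)])
    hTRT hTLT
  obtain ⟨k₄, hk₄a, hk₄b⟩ := edge_trap (θ := fun p => θ p + π)
    (isPreconnected_singleton.prod isPreconnected_Icc)
    ((hθc.mono hsubL).add continuousOn_const)
    (by
      rintro ⟨x, y⟩ hp
      have hx : x = a₁ := hp.1
      subst hx
      have h1 := hfl y hp.2
      rw [hfcos _ (hsubL hp)] at h1
      rw [Real.cos_add_pi]
      nlinarith [Real.exp_pos ((L (x, y)).re)])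
    hTLL hBLL
  obtain ⟨hA1, hA2⟩ := abs_le.1 hk₁a
  obtain ⟨hB1, hB2⟩ := abs_le.1 hk₁b
  obtain ⟨hB3, hB4⟩ := abs_le.1 hk₂a
  obtain ⟨hC1, hC2⟩ := abs_le.1 hk₂b
  obtain ⟨hC3, hC4⟩ := abs_le.1 hk₃a
  obtain ⟨hD1, hD2⟩ := abs_le.1 hk₃b
  obtain ⟨hD3, hD4⟩ := abs_le.1 hk₄a
  obtain ⟨hA3, hA4⟩ := abs_le.1 hk₄b
  beta_reduce at hA1 hA2 hB1 hB2 hB3 hB4 hC1 hC2 hC3 hC4 hD1 hD2 hD3 hD4 hA3 hA4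
  have e21 : k₂ - k₁ = 0 := by
    apply int_zero_of_pi <;> push_cast <;> linarith
  have e32 : k₃ - k₂ = 0 := by
    apply int_zero_of_pi <;> push_cast <;> linarith
  have e43 : k₄ - k₃ = 1 := by
    apply int_one_of_pi <;> push_cast <;> linarith
  have hk₄eq : (k₄:ℝ) = (k₁:ℝ) + 1 := by
    have h5 : k₄ = k₁ + 1 := by omega
    exact_mod_cast congrArg (Int.cast : ℤ → ℝ) h5
  rw [hk₄eq] at hA3
  linarith

lemma sin_lipschitz : LipschitzWith 1 Real.sin := by
  apply lipschitzWith_of_nnnorm_deriv_le Real.differentiable_sin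
  intro x
  rw [Real.deriv_sin, ← NNReal.coe_le_coe, coe_nnnorm, NNReal.coe_one, Real.norm_eq_abs]
  exact Real.abs_cos_le_one x

/-- The first-order vector field equivalent to the pendulum equation. -/
noncomputable def vf (c a b K : ℝ) (p₀ : ℝ → ℝ) (t : ℝ) (u : ℝ × ℝ) : ℝ × ℝ :=
  (psi c (u.2 - a * u.1), p₀ t + K - b * Real.sin u.1)


set_option maxHeartbeats 1000000 in
/-- for every `r` the integro-differential Dirichlet problem on `[0, T]`
has a solution with `x(0) = x(T) = r`. Here `v` is the derivative of `x` and `w` the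
derivative of `t ↦ φ(x'(t))` on `[0, T]`, both continuous. -/
theorem dirichlet_integrodifferential (c a b T : ℝ) (hc : 0 < c) (ha : 0 < a) (hb : 0 < b)
    (hT : 0 < T) (p₀ : ℝ → ℝ) (hp₀cont : Continuous p₀) (hp₀per : Function.Periodic p₀ T)
    (hp₀avg : (∫ t in (0:ℝ)..T, p₀ t) = 0) (r : ℝ) :
    ∃ x v w : ℝ → ℝ,
      ContinuousOn v (Set.Icc 0 T) ∧ ContinuousOn w (Set.Icc 0 T) ∧
      (∀ t ∈ Set.Icc (0:ℝ) T, HasDerivWithinAt x (v t) (Set.Icc 0 T) t) ∧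
      (∀ t ∈ Set.Icc (0:ℝ) T, |v t| < c) ∧
      (∀ t ∈ Set.Icc (0:ℝ) T, HasDerivWithinAt (fun τ : ℝ => phi c (v τ)) (w t) (Set.Icc 0 T) t) ∧
      x 0 = r ∧ x T = r ∧
      (∀ t ∈ Set.Icc (0:ℝ) T,
        w t + a * v t + b * Real.sin (x t)
          = p₀ t + (b / T) * ∫ τ in (0:ℝ)..T, Real.sin (x τ)) := by

  -- bound for p₀ on [0, T]
  obtain ⟨Mp, hMp0, hMp⟩ : ∃ M : ℝ, 0 ≤ M ∧ ∀ t ∈ Icc (0:ℝ) T, |p₀ t| ≤ M := by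
    obtain ⟨tm, _, htm⟩ := isCompact_Icc.exists_isMaxOn (nonempty_Icc.2 hT.le)
      (hp₀cont.abs.continuousOn (s := Icc 0 T))
    exact ⟨max (|p₀ tm|) 0, le_max_right _ _,
      fun t ht => le_trans (htm ht) (le_max_left _ _)⟩
  -- the Lipschitz constant
  set Λr : ℝ := 1 + a + b with hΛr
  have hΛr0 : 0 < Λr := by positivity
  set Λ : ℝ≥0 := ⟨Λr, hΛr0.le⟩ with hΛ
  have hΛco : (Λ : ℝ) = Λr := rfl
  have hΛne : Λ ≠ 0 := by
    simp only [← NNReal.coe_ne_zero, hΛco]; exact ne_of_gt hΛr0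
  -- global Lipschitz continuity of the vector field
  have hlip : ∀ (K t : ℝ), LipschitzWith Λ (vf c a b K p₀ t) := by
    intro K t
    apply LipschitzWith.of_dist_le_mul
    intro u u'
    have hd1 : |u.1 - u'.1| ≤ dist u u' := by
      rw [Prod.dist_eq, ← Real.dist_eq]; exact le_max_left _ _
    have hd2 : |u.2 - u'.2| ≤ dist u u' := by
      rw [Prod.dist_eq, ← Real.dist_eq]; exact le_max_right _ _
    have hdnn : (0:ℝ) ≤ dist u u' := dist_nonneg
    have hcoe : (Λ : ℝ) = Λr := rfl
    rw [Prod.dist_eq]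
    simp only [vf]
    apply max_le
    · have h1 := (psi_lipschitz hc).dist_le_mul (u.2 - a * u.1) (u'.2 - a * u'.1)
      simp only [NNReal.coe_one, one_mul] at h1
      refine h1.trans ?_
      rw [Real.dist_eq, hcoe, hΛr]
      have h2 : |(u.2 - a*u.1) - (u'.2 - a*u'.1)| ≤ |u.2 - u'.2| + a * |u.1 - u'.1| := by
        have h3 := abs_add_le (u.2 - u'.2) (-(a * (u.1 - u'.1)))
        have h4 : (u.2 - u'.2) + (-(a * (u.1 - u'.1))) = (u.2 - a*u.1) - (u'.2 - a*u'.1) := by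
          ring
        rw [h4, abs_neg, abs_mul, abs_of_pos ha] at h3
        exact h3
      nlinarith [abs_nonneg (u.1 - u'.1), abs_nonneg (u.2 - u'.2)]
    · rw [Real.dist_eq, hcoe, hΛr]
      have h5 : (p₀ t + K - b * Real.sin u.1) - (p₀ t + K - b * Real.sin u'.1)
          = -(b * (Real.sin u.1 - Real.sin u'.1)) := by ring
      rw [h5, abs_neg, abs_mul, abs_of_pos hb]
      have h6 := sin_lipschitz.dist_le_mul u.1 u'.1
      simp only [NNReal.coe_one, one_mul, Real.dist_eq] at h6
      nlinarith [abs_nonneg (u.1 - u'.1)]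
  -- existence of solutions
  have hex : ∀ P : ℝ × ℝ, ∃ u : ℝ → ℝ × ℝ, u 0 = (r, P.2) ∧
      ∀ t ∈ Icc (0:ℝ) T, HasDerivWithinAt u (vf c a b P.1 p₀ t (u t)) (Icc (0:ℝ) T) t := by
    intro P
    set CC : ℝ := max c (Mp + |P.1| + b) with hCC
    have hCC0 : 0 ≤ CC := le_trans hc.le (le_max_left _ _)
    set CCn : ℝ≥0 := ⟨CC, hCC0⟩ with hCCn
    have hpl : IsPicardLindelof (vf c a b P.1 p₀) (tmin := 0) (tmax := T)
        ⟨0, left_mem_Icc.2 hT.le⟩ (r, P.2) (CCn * ⟨T, hT.le⟩) 0 CCn Λ := by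
      constructor
      · exact fun t _ => (hlip P.1 t).lipschitzOnWith
      · intro x _
        apply ContinuousOn.prodMk
        · exact continuousOn_const
        · exact (hp₀cont.continuousOn.add continuousOn_const).sub continuousOn_const
      · intro t ht x _
        show ‖vf c a b P.1 p₀ t x‖ ≤ CC
        simp only [vf]
        rw [Prod.norm_def]
        apply max_le
        · rw [Real.norm_eq_abs]
          exact le_trans (psi_abs_le hc _) (le_max_left _ _)
        · rw [Real.norm_eq_abs]
          refine le_trans ?_ (le_max_right _ _)
          have h3 := abs_add_le (p₀ t + P.1) (-(b * Real.sin x.1))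
          have h4 : (p₀ t + P.1) + (-(b * Real.sin x.1)) = p₀ t + P.1 - b * Real.sin x.1 := by
            ring
          rw [h4, abs_neg, abs_mul, abs_of_pos hb] at h3
          have h5 := abs_add_le (p₀ t) P.1
          have h6 := hMp t ht
          have h7 : |Real.sin x.1| ≤ 1 := Real.abs_sin_le_one x.1
          nlinarith [mul_le_mul_of_nonneg_left h7 hb.le]
      · show CC * max (T - 0) (0 - 0) ≤ CC * T - 0
        rw [show max (T - 0) (0 - 0) = T by
          rw [sub_zero, sub_zero]; exact max_eq_left hT.le]
        rw [sub_zero]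
    exact IsPicardLindelof.exists_eq_forall_mem_Icc_hasDerivWithinAt₀ hpl
  set sol : ℝ × ℝ → ℝ → ℝ × ℝ := fun P => Classical.choose (hex P) with hsol
  have sol0 : ∀ P, sol P 0 = (r, P.2) := fun P => (Classical.choose_spec (hex P)).1
  have solderiv : ∀ P, ∀ t ∈ Icc (0:ℝ) T,
      HasDerivWithinAt (sol P) (vf c a b P.1 p₀ t (sol P t)) (Icc (0:ℝ) T) t :=
    fun P => (Classical.choose_spec (hex P)).2
  have solcont : ∀ P, ContinuousOn (sol P) (Icc (0:ℝ) T) :=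
    fun P t ht => (solderiv P t ht).continuousWithinAt
  -- the first components, with derivatives
  have solfst : ∀ P, ∀ t ∈ Icc (0:ℝ) T,
      HasDerivWithinAt (fun τ => (sol P τ).1) (psi c ((sol P t).2 - a * (sol P t).1))
        (Icc (0:ℝ) T) t := by
    intro P t ht
    exact ((ContinuousLinearMap.fst ℝ ℝ ℝ).hasFDerivAt).comp_hasDerivWithinAt t (solderiv P t ht)
  have solsnd : ∀ P, ∀ t ∈ Icc (0:ℝ) T,
      HasDerivWithinAt (fun τ => (sol P τ).2) (p₀ t + P.1 - b * Real.sin ((sol P t).1))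
        (Icc (0:ℝ) T) t := by
    intro P t ht
    exact ((ContinuousLinearMap.snd ℝ ℝ ℝ).hasFDerivAt).comp_hasDerivWithinAt t (solderiv P t ht)
  -- Grönwall estimate : Lipschitz dependence on the data
  set C₀ : ℝ := Real.exp (Λr * T) + Real.exp (Λr * T) / Λr with hC₀
  have hC₀0 : 0 < C₀ := by positivity
  have hIci : ∀ (Q : ℝ × ℝ), ∀ s ∈ Ico (0:ℝ) T, HasDerivWithinAt (sol Q)
      (vf c a b Q.1 p₀ s (sol Q s)) (Ici s) s := by
    intro Q s hs
    have h1 := (solderiv Q s ⟨hs.1, hs.2.le⟩).mono (Icc_subset_Icc hs.1 le_rfl)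
    apply h1.mono_of_mem_nhdsWithin
    rw [← Set.Ici_inter_Iic]
    exact inter_mem_nhdsWithin _ (Iic_mem_nhds hs.2)
  have hgron : ∀ P P' : ℝ × ℝ, ∀ t ∈ Icc (0:ℝ) T,
      dist (sol P t) (sol P' t) ≤ C₀ * dist P P' := by
    intro P P' t ht
    set d := dist P P' with hd
    have hd0 : (0:ℝ) ≤ d := dist_nonneg
    have key := dist_le_of_approx_trajectories_ODE (v := vf c a b P.1 p₀) (K := Λ)
      (f := sol P) (g := sol P') (f' := fun s => vf c a b P.1 p₀ s (sol P s))
      (g' := fun s => vf c a b P'.1 p₀ s (sol P' s)) (εf := 0) (εg := d) (δ := d)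
      (a := 0) (b := T)
      (fun s => hlip P.1 s) (solcont P) (fun s hs => hIci P s hs)
      (fun s _ => by rw [dist_self])
      (solcont P') (fun s hs => hIci P' s hs)
      (fun s _ => by
        simp only [vf, Prod.dist_eq]
        apply max_le
        · rw [dist_self]; exact hd0
        · rw [Real.dist_eq]
          have h8 : (p₀ s + P'.1 - b * Real.sin ((sol P' s).1))
              - (p₀ s + P.1 - b * Real.sin ((sol P' s).1)) = P'.1 - P.1 := by ring
          rw [h8, ← Real.dist_eq, dist_comm]
          rw [hd, Prod.dist_eq]
          exact le_max_left _ _)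
      (by
        rw [sol0 P, sol0 P', Prod.dist_eq]
        apply max_le
        · rw [dist_self]; exact hd0
        · rw [hd, Prod.dist_eq]; exact le_max_right _ _)
      t ht
    rw [zero_add, sub_zero] at key
    refine key.trans ?_
    have hΛR : (Λ : ℝ) ≠ 0 := by rw [hΛco]; exact ne_of_gt hΛr0
    rw [gronwallBound_of_K_ne_0 hΛR, hΛco]
    have hexp : Real.exp (Λr * t) ≤ Real.exp (Λr * T) := by
      apply Real.exp_le_exp.2
      nlinarith [ht.2, hΛr0]
    have hexp1 : (1:ℝ) ≤ Real.exp (Λr * t) := by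
      apply Real.one_le_exp
      nlinarith [ht.1, hΛr0]
    have hexp0 : (0:ℝ) < Real.exp (Λr * T) := Real.exp_pos _
    have h1 : d * Real.exp (Λr * t) ≤ d * Real.exp (Λr * T) :=
      mul_le_mul_of_nonneg_left hexp hd0
    have h2 : d / Λr * (Real.exp (Λr * t) - 1) ≤ d / Λr * Real.exp (Λr * T) := by
      apply mul_le_mul_of_nonneg_left _ (by positivity)
      linarith
    have h9 : d / Λr * Real.exp (Λr * T) = Real.exp (Λr * T) / Λr * d := by ring
    have h10 : C₀ * d = Real.exp (Λr * T) * d + Real.exp (Λr * T) / Λr * d := by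
      rw [hC₀]; ring
    rw [h10]
    nlinarith [h1, h2]
  -- the two shooting functionals
  set xT : ℝ × ℝ → ℝ := fun P => (sol P T).1 with hxT
  set SI : ℝ × ℝ → ℝ := fun P => ∫ τ in (0:ℝ)..T, Real.sin ((sol P τ).1) with hSI
  have hsinint : ∀ P : ℝ × ℝ, IntervalIntegrable (fun τ => Real.sin ((sol P τ).1))
      volume 0 T := by
    intro P
    apply ContinuousOn.intervalIntegrable
    rw [uIcc_of_le hT.le]
    exact Real.continuous_sin.comp_continuousOn (continuous_fst.comp_continuousOn (solcont P))
  have hxTcont : Continuous xT := by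
    have hl : LipschitzWith (Real.toNNReal C₀) xT := by
      apply LipschitzWith.of_dist_le_mul
      intro P P'
      have h1 := hgron P P' T (right_mem_Icc.2 hT.le)
      have h2 : dist (xT P) (xT P') ≤ dist (sol P T) (sol P' T) := by
        simp only [hxT]
        rw [Prod.dist_eq]
        exact le_max_left _ _
      rw [Real.coe_toNNReal _ hC₀0.le]
      exact h2.trans h1
    exact hl.continuous
  have hSIcont : Continuous SI := by
    have hl : LipschitzWith (Real.toNNReal (C₀ * T)) SI := by
      apply LipschitzWith.of_dist_le_mul
      intro P P'
      rw [Real.coe_toNNReal _ (by positivity)]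
      rw [Real.dist_eq]
      simp only [hSI]
      rw [← intervalIntegral.integral_sub (hsinint P) (hsinint P')]
      have hb2 : ∀ τ ∈ Set.uIoc (0:ℝ) T,
          ‖Real.sin ((sol P τ).1) - Real.sin ((sol P' τ).1)‖ ≤ C₀ * dist P P' := by
        intro τ hτ
        have hτ' : τ ∈ Icc (0:ℝ) T := Ioc_subset_Icc_self (by rwa [uIoc_of_le hT.le] at hτ)
        rw [Real.norm_eq_abs]
        have h3 := sin_lipschitz.dist_le_mul ((sol P τ).1) ((sol P' τ).1)
        simp only [NNReal.coe_one, one_mul, Real.dist_eq] at h3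
        have h4 : |(sol P τ).1 - (sol P' τ).1| ≤ dist (sol P τ) (sol P' τ) := by
          rw [Prod.dist_eq, ← Real.dist_eq]
          exact le_max_left _ _
        have h5 := hgron P P' τ hτ'
        linarith
      have hb3 := intervalIntegral.norm_integral_le_of_norm_le_const hb2
      rw [Real.norm_eq_abs, sub_zero, abs_of_pos hT] at hb3
      refine hb3.trans (le_of_eq ?_)
      ring
    exact hl.continuous
  have hSIbnd : ∀ P, |SI P| ≤ T := by
    intro P
    have := intervalIntegral.norm_integral_le_of_norm_le_const
      (C := 1) (f := fun τ => Real.sin ((sol P τ).1)) (a := (0:ℝ)) (b := T)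
      (fun τ _ => by simpa using Real.abs_sin_le_one _)
    simpa [abs_of_pos hT, Real.norm_eq_abs] using this
  -- the escape bound
  set Y : ℝ := 1 + (Mp + 2*b)*T + a*(|r| + c*T) with hY
  have hY0 : 0 < Y := by positivity
  -- boundary estimates
  have hup : ∀ P : ℝ × ℝ, P.1 ∈ Icc (-b) b → P.2 = Y → r ≤ xT P := by
    intro P hK hy
    have hx0 : (sol P 0).1 = r := by rw [sol0]
    have hy0 : (sol P 0).2 = Y := by rw [sol0]; exact hy
    have hxb : ∀ t ∈ Icc (0:ℝ) T, |(sol P t).1 - r| ≤ c * t := by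
      intro t ht
      have hmv := Convex.norm_image_sub_le_of_norm_hasDerivWithin_le
        (f := fun τ => (sol P τ).1) (f' := fun τ => psi c ((sol P τ).2 - a * (sol P τ).1))
        (s := Icc (0:ℝ) T) (C := c)
        (fun τ hτ => solfst P τ hτ)
        (fun τ _ => by rw [Real.norm_eq_abs]; exact psi_abs_le hc _)
        (convex_Icc _ _) (left_mem_Icc.2 hT.le) ht
      simpa [hx0, Real.norm_eq_abs, sub_zero, abs_of_nonneg ht.1] using hmv
    have hyb : ∀ t ∈ Icc (0:ℝ) T, |(sol P t).2 - Y| ≤ (Mp + 2*b) * t := by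
      intro t ht
      have hmv := Convex.norm_image_sub_le_of_norm_hasDerivWithin_le
        (f := fun τ => (sol P τ).2)
        (f' := fun τ => p₀ τ + P.1 - b * Real.sin ((sol P τ).1))
        (s := Icc (0:ℝ) T) (C := Mp + 2*b)
        (fun τ hτ => solsnd P τ hτ)
        (fun τ hτ => by
          rw [Real.norm_eq_abs]
          have h3 := abs_add_le (p₀ τ + P.1) (-(b * Real.sin ((sol P τ).1)))
          have h4 : (p₀ τ + P.1) + (-(b * Real.sin ((sol P τ).1)))
              = p₀ τ + P.1 - b * Real.sin ((sol P τ).1) := by ring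
          rw [h4, abs_neg, abs_mul, abs_of_pos hb] at h3
          have h5 := abs_add_le (p₀ τ) P.1
          have h6 := hMp τ hτ
          have h7 : |Real.sin ((sol P τ).1)| ≤ 1 := Real.abs_sin_le_one _
          have h8 : |P.1| ≤ b := abs_le.2 hK
          nlinarith)
        (convex_Icc _ _) (left_mem_Icc.2 hT.le) ht
      simpa [hy0, Real.norm_eq_abs, sub_zero, abs_of_nonneg ht.1] using hmv
    have hz : ∀ t ∈ Icc (0:ℝ) T, 0 ≤ (sol P t).2 - a * (sol P t).1 := by
      intro t ht
      have h1 := abs_le.1 (hxb t ht)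
      have h2 := abs_le.1 (hyb t ht)
      have hct : c * t ≤ c * T := by nlinarith [ht.2]
      have hmt : (Mp + 2*b) * t ≤ (Mp + 2*b) * T := by nlinarith [ht.2]
      have har : (sol P t).1 ≤ |r| + c * T := by
        have := le_abs_self r
        linarith [h1.2]
      have haxr : a * (sol P t).1 ≤ a * (|r| + c * T) :=
        mul_le_mul_of_nonneg_left har ha.le
      have hyl : Y - (Mp + 2*b) * T ≤ (sol P t).2 := by linarith [h2.1]
      rw [hY] at hyl
      linarith
    have hmono : MonotoneOn (fun t => (sol P t).1) (Icc (0:ℝ) T) := by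
      apply monotoneOn_of_deriv_nonneg (convex_Icc _ _)
      · exact continuous_fst.comp_continuousOn (solcont P)
      · rw [interior_Icc]
        intro t ht
        exact ((solfst P t (Ioo_subset_Icc_self ht)).hasDerivAt
          (Icc_mem_nhds ht.1 ht.2)).differentiableAt.differentiableWithinAt
      · rw [interior_Icc]
        intro t ht
        rw [((solfst P t (Ioo_subset_Icc_self ht)).hasDerivAt
          (Icc_mem_nhds ht.1 ht.2)).deriv]
        exact psi_nonneg hc (hz t (Ioo_subset_Icc_self ht))
    have hfin := hmono (left_mem_Icc.2 hT.le) (right_mem_Icc.2 hT.le) hT.le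
    simp only at hfin
    rw [hx0] at hfin
    exact hfin
  have hdown : ∀ P : ℝ × ℝ, P.1 ∈ Icc (-b) b → P.2 = -Y → xT P ≤ r := by
    intro P hK hy
    have hx0 : (sol P 0).1 = r := by rw [sol0]
    have hy0 : (sol P 0).2 = -Y := by rw [sol0]; exact hy
    have hxb : ∀ t ∈ Icc (0:ℝ) T, |(sol P t).1 - r| ≤ c * t := by
      intro t ht
      have hmv := Convex.norm_image_sub_le_of_norm_hasDerivWithin_le
        (f := fun τ => (sol P τ).1) (f' := fun τ => psi c ((sol P τ).2 - a * (sol P τ).1))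
        (s := Icc (0:ℝ) T) (C := c)
        (fun τ hτ => solfst P τ hτ)
        (fun τ _ => by rw [Real.norm_eq_abs]; exact psi_abs_le hc _)
        (convex_Icc _ _) (left_mem_Icc.2 hT.le) ht
      simpa [hx0, Real.norm_eq_abs, sub_zero, abs_of_nonneg ht.1] using hmv
    have hyb : ∀ t ∈ Icc (0:ℝ) T, |(sol P t).2 - (-Y)| ≤ (Mp + 2*b) * t := by
      intro t ht
      have hmv := Convex.norm_image_sub_le_of_norm_hasDerivWithin_le
        (f := fun τ => (sol P τ).2)
        (f' := fun τ => p₀ τ + P.1 - b * Real.sin ((sol P τ).1))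
        (s := Icc (0:ℝ) T) (C := Mp + 2*b)
        (fun τ hτ => solsnd P τ hτ)
        (fun τ hτ => by
          rw [Real.norm_eq_abs]
          have h3 := abs_add_le (p₀ τ + P.1) (-(b * Real.sin ((sol P τ).1)))
          have h4 : (p₀ τ + P.1) + (-(b * Real.sin ((sol P τ).1)))
              = p₀ τ + P.1 - b * Real.sin ((sol P τ).1) := by ring
          rw [h4, abs_neg, abs_mul, abs_of_pos hb] at h3
          have h5 := abs_add_le (p₀ τ) P.1
          have h6 := hMp τ hτ
          have h7 : |Real.sin ((sol P τ).1)| ≤ 1 := Real.abs_sin_le_one _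
          have h8 : |P.1| ≤ b := abs_le.2 hK
          nlinarith)
        (convex_Icc _ _) (left_mem_Icc.2 hT.le) ht
      simpa [hy0, Real.norm_eq_abs, sub_zero, abs_of_nonneg ht.1] using hmv
    have hz : ∀ t ∈ Icc (0:ℝ) T, (sol P t).2 - a * (sol P t).1 ≤ 0 := by
      intro t ht
      have h1 := abs_le.1 (hxb t ht)
      have h2 := abs_le.1 (hyb t ht)
      have hct : c * t ≤ c * T := by nlinarith [ht.2]
      have hmt : (Mp + 2*b) * t ≤ (Mp + 2*b) * T := by nlinarith [ht.2]
      have har : -(|r| + c * T) ≤ (sol P t).1 := by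
        have := neg_abs_le r
        linarith [h1.1]
      have haxr : a * (-(|r| + c * T)) ≤ a * (sol P t).1 :=
        mul_le_mul_of_nonneg_left har ha.le
      have hyl : (sol P t).2 ≤ -Y + (Mp + 2*b) * T := by linarith [h2.2]
      rw [hY] at hyl
      nlinarith
    have hmono : AntitoneOn (fun t => (sol P t).1) (Icc (0:ℝ) T) := by
      apply antitoneOn_of_deriv_nonpos (convex_Icc _ _)
      · exact continuous_fst.comp_continuousOn (solcont P)
      · rw [interior_Icc]
        intro t ht
        exact ((solfst P t (Ioo_subset_Icc_self ht)).hasDerivAt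
          (Icc_mem_nhds ht.1 ht.2)).differentiableAt.differentiableWithinAt
      · rw [interior_Icc]
        intro t ht
        rw [((solfst P t (Ioo_subset_Icc_self ht)).hasDerivAt
          (Icc_mem_nhds ht.1 ht.2)).deriv]
        exact psi_nonpos hc (hz t (Ioo_subset_Icc_self ht))
    have hfin := hmono (left_mem_Icc.2 hT.le) (right_mem_Icc.2 hT.le) hT.le
    simp only at hfin
    rw [hx0] at hfin
    exact hfin
  -- Poincaré–Miranda
  obtain ⟨P, hPQ, hf0, hg0⟩ := poincare_miranda (a₁ := -b) (b₁ := b) (a₂ := -Y) (b₂ := Y)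
    (by linarith) (by linarith)
    (f := fun P => P.1 - (b/T) * SI P) (g := fun P => xT P - r)
    ((continuous_fst.sub (continuous_const.mul hSIcont)).continuousOn)
    ((hxTcont.sub continuous_const).continuousOn)
    (by
      intro y hy
      have h1 := hSIbnd (-b, y)
      have h2 : (b/T) * SI (-b, y) ≥ (b/T) * (-T) := by
        apply mul_le_mul_of_nonneg_left _ (by positivity)
        nlinarith [abs_le.1 h1]
      have h3 : (b/T) * T = b := by field_simp
      simp only
      nlinarith
    )
    (by
      intro y hy
      have h1 := hSIbnd (b, y)
      have h2 : (b/T) * SI (b, y) ≤ (b/T) * T := by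
        apply mul_le_mul_of_nonneg_left _ (by positivity)
        nlinarith [abs_le.1 h1]
      have h3 : (b/T) * T = b := by field_simp
      simp only
      nlinarith
    )
    (by
      intro K hK
      simp only [sub_nonpos]
      have := hdown (K, -Y) hK rfl
      simpa using this
    )
    (by
      intro K hK
      simp only [sub_nonneg]
      have := hup (K, Y) hK rfl
      simpa using this
    )
  -- assemble the solution
  set K : ℝ := P.1 with hK
  set x : ℝ → ℝ := fun t => (sol P t).1 with hx
  set v : ℝ → ℝ := fun t => psi c ((sol P t).2 - a * (sol P t).1) with hv
  set w : ℝ → ℝ := fun t => p₀ t + K - b * Real.sin (x t) - a * v t with hw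
  have hxcont : ContinuousOn x (Icc (0:ℝ) T) := continuous_fst.comp_continuousOn (solcont P)
  have hvcont : ContinuousOn v (Icc (0:ℝ) T) := by
    apply (psi_continuous hc).comp_continuousOn
    exact (continuous_snd.comp_continuousOn (solcont P)).sub (continuousOn_const.mul hxcont)
  have hKeq : K = (b/T) * SI P := by
    have : K - (b/T) * SI P = 0 := hf0
    linarith
  have hxTr : x T = r := by
    have : xT P - r = 0 := hg0
    simp only [hxT] at this
    simp only [hx]
    linarith
  refine ⟨x, v, w, hvcont, ?_, ?_, ?_, ?_, ?_, hxTr, ?_⟩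
  · -- continuity of w
    apply ContinuousOn.sub
    apply ContinuousOn.sub
    apply ContinuousOn.add hp₀cont.continuousOn continuousOn_const
    · exact continuousOn_const.mul (Real.continuous_sin.comp_continuousOn hxcont)
    · exact continuousOn_const.mul hvcont
  · -- derivative of x
    intro t ht
    exact solfst P t ht
  · -- |v| < c
    intro t ht
    exact psi_abs_lt hc _
  · -- derivative of phi ∘ v
    intro t ht
    have hfun : (fun τ : ℝ => phi c (v τ)) = fun τ => (sol P τ).2 - a * (sol P τ).1 := by
      funext τ
      exact phi_psi hc _
    rw [hfun]
    have h1 := (solsnd P t ht).sub ((solfst P t ht).const_mul a)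
    exact h1
  · -- x 0 = r
    simp only [hx, sol0 P]
  · -- the equation
    intro t ht
    simp only [hw]
    rw [hKeq]
    simp only [hSI, hx]
    ring
end

section
/- If x : ℝ → ℝ is a continuously differentiable T-periodic function, then max x − min x ≤ (1/2)·∫₀ᵀ |x'(t)| dt. Consequently ‖x − x̄‖∞ ≤ (T/2)·‖x'‖∞, where x̄ = (1/T)·∫₀ᵀ x(t) dt, i.e. the optimal constant k in the inequality ‖x − x̄‖∞ ≤ k·‖x'‖∞ over T-periodic C¹ functions satisfies k ≤ T/2. -/
open Real Set MeasureTheory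

/-- for a `T`-periodic `C¹` function, `max x - min x ≤ ½ ∫₀ᵀ |x'|`;
consequently `‖x - x̄‖∞ ≤ (T/2)‖x'‖∞`, i.e. the optimal constant `k` satisfies `k ≤ T/2`. -/
theorem periodic_oscillation_bound (T : ℝ) (hT : 0 < T) (x : ℝ → ℝ)
    (hper : Function.Periodic x T) (hC1 : ContDiff ℝ 1 x) :
    (∀ t s : ℝ, x t - x s ≤ (1 / 2) * ∫ τ in (0:ℝ)..T, |deriv x τ|) ∧
    (∀ M : ℝ, (∀ τ : ℝ, |deriv x τ| ≤ M) →
      ∀ t : ℝ, |x t - (1 / T) * ∫ τ in (0:ℝ)..T, x τ| ≤ (T / 2) * M) := by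
  have hdiff : Differentiable ℝ x := hC1.differentiable one_ne_zero
  have hcont : Continuous (deriv x) := hC1.continuous_deriv le_rfl
  have hdper : Function.Periodic (fun t => |deriv x t|) T := by
    intro t
    have h1 : deriv x (t + T) = deriv (fun s => x (s + T)) t := by
      rw [deriv_comp_add_const]
    have h2 : (fun s => x (s + T)) = x := funext fun s => hper s
    simp only [h1, h2]
  set I := ∫ τ in (0:ℝ)..T, |deriv x τ| with hI
  have habsint : ∀ a b : ℝ, IntervalIntegrable (fun τ => |deriv x τ|) volume a b :=
    fun a b => (hcont.abs.intervalIntegrable a b)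
  have ftc : ∀ a b : ℝ, ∫ τ in a..b, deriv x τ = x b - x a := fun a b =>
    intervalIntegral.integral_deriv_eq_sub (fun τ _ => hdiff τ) (hcont.intervalIntegrable a b)
  have key : ∀ s t : ℝ, s ≤ t → t ≤ s + T → x t - x s ≤ (1 / 2) * I := by
    intro s t hst htT
    have h1 : x t - x s ≤ ∫ τ in s..t, |deriv x τ| := by
      rw [← ftc s t]
      exact le_trans (le_abs_self _) (intervalIntegral.abs_integral_le_integral_abs hst)
    have h2 : x t - x s ≤ ∫ τ in t..s + T, |deriv x τ| := by
      have hx : x t - x s = -(x (s + T) - x t) := by rw [hper s]; ring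
      rw [hx, ← ftc t (s + T)]
      exact le_trans (neg_le_abs _) (intervalIntegral.abs_integral_le_integral_abs htT)
    have h3 : (∫ τ in s..t, |deriv x τ|) + ∫ τ in t..s + T, |deriv x τ|
        = ∫ τ in s..s + T, |deriv x τ| :=
      intervalIntegral.integral_add_adjacent_intervals (habsint s t) (habsint t (s + T))
    have h4 : (∫ τ in s..s + T, |deriv x τ|) = I := by
      rw [hdper.intervalIntegral_add_eq s 0, zero_add]
    linarith
  have part1 : ∀ t s : ℝ, x t - x s ≤ (1 / 2) * I := by
    intro t s
    set t' := toIcoMod hT s t with ht'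
    have hmem := toIcoMod_mem_Ico hT s t
    have hxt' : x t' = x t := by
      rw [ht', ← self_sub_toIcoDiv_zsmul hT s t, hper.sub_zsmul_eq]
    calc x t - x s = x t' - x s := by rw [hxt']
      _ ≤ (1 / 2) * I := key s t' hmem.1 hmem.2.le
  refine ⟨part1, ?_⟩
  intro M hM t
  have hMnn : 0 ≤ M := le_trans (abs_nonneg _) (hM 0)
  have hIbound : I ≤ T * M := by
    calc I ≤ ∫ _ in (0:ℝ)..T, M := by
          apply intervalIntegral.integral_mono_on hT.le (habsint 0 T)
            intervalIntegrable_const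
          intro τ _; exact hM τ
      _ = T * M := by simp [mul_comm]
  have osc : ∀ a : ℝ, |x t - x a| ≤ (T / 2) * M := by
    intro a
    have h1 := part1 t a
    have h2 := part1 a t
    rw [abs_sub_le_iff]
    constructor <;> linarith
  have hxint : IntervalIntegrable x volume 0 T := hC1.continuous.intervalIntegrable 0 T
  have hsplit : x t - (1 / T) * ∫ τ in (0:ℝ)..T, x τ
      = (1 / T) * ∫ τ in (0:ℝ)..T, (x t - x τ) := by
    rw [intervalIntegral.integral_sub (intervalIntegrable_const) hxint]
    simp
    field_simp
  rw [hsplit]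
  have habs : |∫ τ in (0:ℝ)..T, (x t - x τ)| ≤ ∫ τ in (0:ℝ)..T, |x t - x τ| :=
    intervalIntegral.abs_integral_le_integral_abs hT.le
  have hint2 : (∫ τ in (0:ℝ)..T, |x t - x τ|) ≤ T * ((T / 2) * M) := by
    calc (∫ τ in (0:ℝ)..T, |x t - x τ|) ≤ ∫ _ in (0:ℝ)..T, (T / 2) * M := by
          apply intervalIntegral.integral_mono_on hT.le
            ((continuous_const.sub hC1.continuous).abs.intervalIntegrable 0 T)
            intervalIntegrable_const
          intro τ _; exact osc τ
      _ = T * ((T / 2) * M) := by simp; ring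
  rw [abs_mul, abs_of_pos (by positivity : (0:ℝ) < 1 / T)]
  calc (1 / T) * |∫ τ in (0:ℝ)..T, (x t - x τ)| ≤ (1 / T) * (T * ((T / 2) * M)) := by
        apply mul_le_mul_of_nonneg_left (le_trans habs hint2) (by positivity)
    _ = (T / 2) * M := by field_simp
end

section
/- Sobolev inequality for periodic functions: if x : ℝ → ℝ is a continuously differentiable T-periodic function, then ‖x − x̄‖∞ ≤ √(T/12) · ‖x'‖_{L²(0,T)}, where x̄ = (1/T)·∫₀ᵀ x(t) dt and ‖x'‖_{L²(0,T)} = (∫₀ᵀ x'(t)² dt)^{1/2}. Consequently ‖x − x̄‖∞ ≤ (T/(2√3))·‖x'‖∞. -/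
open Real Set MeasureTheory

/-- Cauchy–Schwarz for interval integrals of continuous functions. -/
lemma interval_cauchy_schwarz (a b : ℝ) (hab : a ≤ b) (f g : ℝ → ℝ)
    (hf : Continuous f) (hg : Continuous g) :
    |∫ s in a..b, f s * g s| ≤
      Real.sqrt (∫ s in a..b, f s ^ 2) * Real.sqrt (∫ s in a..b, g s ^ 2) := by
  set A := ∫ s in a..b, f s ^ 2 with hA
  set B := ∫ s in a..b, g s ^ 2 with hB
  set C := ∫ s in a..b, f s * g s with hC
  have hAint : IntervalIntegrable (fun s => f s ^ 2) volume a b :=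
    (hf.pow 2).intervalIntegrable a b
  have hBint : IntervalIntegrable (fun s => g s ^ 2) volume a b :=
    (hg.pow 2).intervalIntegrable a b
  have hCint : IntervalIntegrable (fun s => f s * g s) volume a b :=
    (hf.mul hg).intervalIntegrable a b
  have hAnn : 0 ≤ A := intervalIntegral.integral_nonneg hab (fun s _ => sq_nonneg _)
  have key : ∀ lam : ℝ, 0 ≤ B * (lam * lam) + (-2 * C) * lam + A := by
    intro lam
    have h1 : (0:ℝ) ≤ ∫ s in a..b, (lam * g s - f s) ^ 2 :=
      intervalIntegral.integral_nonneg hab (fun s _ => sq_nonneg _)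
    have h2 : (∫ s in a..b, (lam * g s - f s) ^ 2)
        = B * (lam * lam) + (-2 * C) * lam + A := by
      have : ∀ s : ℝ, (lam * g s - f s) ^ 2
          = (lam * lam) * g s ^ 2 + (-2 * lam) * (f s * g s) + f s ^ 2 := by
        intro s; ring
      rw [intervalIntegral.integral_congr (fun s _ => this s)]
      rw [intervalIntegral.integral_add ((hBint.const_mul _).add (hCint.const_mul _)) hAint,
        intervalIntegral.integral_add (hBint.const_mul _) (hCint.const_mul _),
        intervalIntegral.integral_const_mul, intervalIntegral.integral_const_mul]
      rw [← hA, ← hB, ← hC]; ring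
    rw [← h2]; exact h1
  have hd : discrim B (-2 * C) A ≤ 0 := discrim_le_zero key
  have hCsq : C ^ 2 ≤ A * B := by
    rw [discrim] at hd; nlinarith
  calc |C| = Real.sqrt (C ^ 2) := (Real.sqrt_sq_eq_abs C).symm
    _ ≤ Real.sqrt (A * B) := Real.sqrt_le_sqrt hCsq
    _ = Real.sqrt A * Real.sqrt B := Real.sqrt_mul hAnn B

/-- Sobolev inequality for `T`-periodic `C¹` functions:
`‖x - x̄‖∞ ≤ √(T/12) ‖x'‖_{L²(0,T)}`, and consequently `‖x - x̄‖∞ ≤ (T/(2√3)) ‖x'‖∞`. -/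
theorem periodic_sobolev_inequality (T : ℝ) (hT : 0 < T) (x : ℝ → ℝ)
    (hper : Function.Periodic x T) (hC1 : ContDiff ℝ 1 x) :
    (∀ t : ℝ, |x t - (1 / T) * ∫ τ in (0:ℝ)..T, x τ|
      ≤ Real.sqrt (T / 12) * Real.sqrt (∫ τ in (0:ℝ)..T, (deriv x τ) ^ 2)) ∧
    (∀ M : ℝ, (∀ τ : ℝ, |deriv x τ| ≤ M) →
      ∀ t : ℝ, |x t - (1 / T) * ∫ τ in (0:ℝ)..T, x τ| ≤ (T / (2 * Real.sqrt 3)) * M) := by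
  have hxdiff : Differentiable ℝ x := hC1.differentiable one_ne_zero
  have hxc : Continuous x := hC1.continuous
  have hdc : Continuous (deriv x) := hC1.continuous_deriv le_rfl
  have hderper : Function.Periodic (deriv x) T := by
    intro t
    have h1 : HasDerivAt x (deriv x (t + T)) (t + T) := (hxdiff (t + T)).hasDerivAt
    have h2 : HasDerivAt (fun s => x (s + T)) (deriv x (t + T)) t := by
      exact (h1.comp t ((hasDerivAt_id' t).add_const T)).congr_deriv (mul_one _)
    have h3 : HasDerivAt x (deriv x (t + T)) t := by
      have : (fun s => x (s + T)) = x := funext fun s => hper s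
      rwa [this] at h2
    exact h3.deriv.symm
  have hder2per : Function.Periodic (fun s => (deriv x s) ^ 2) T := by
    intro t; simp [hderper t]
  have main : ∀ t : ℝ, |x t - (1 / T) * ∫ τ in (0:ℝ)..T, x τ|
      ≤ Real.sqrt (T / 12) * Real.sqrt (∫ τ in (0:ℝ)..T, (deriv x τ) ^ 2) := by
    intro t
    set g : ℝ → ℝ := fun s => (s - t) / T - 1 / 2 with hg
    have hgc : Continuous g := by fun_prop
    have hgd : ∀ s : ℝ, HasDerivAt g (1 / T) s := by
      intro s
      have h := (((hasDerivAt_id s).sub_const t).div_const T).sub_const (1 / 2)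
      simpa [hg, one_div] using h
    have htle : t ≤ t + T := by linarith
    -- integration by parts
    have ibp : ∫ s in t..(t + T), (1 / T) * x s + g s * deriv x s
        = g (t + T) * x (t + T) - g t * x t := by
      apply intervalIntegral.integral_deriv_mul_eq_sub
        (fun s _ => hgd s) (fun s _ => (hxdiff s).hasDerivAt)
      · exact intervalIntegrable_const
      · exact hdc.intervalIntegrable _ _
    have hsplit : ∫ s in t..(t + T), (1 / T) * x s + g s * deriv x s
        = (∫ s in t..(t + T), (1 / T) * x s) + ∫ s in t..(t + T), g s * deriv x s := by
      apply intervalIntegral.integral_add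
      · exact (continuous_const.mul hxc).intervalIntegrable _ _
      · exact (hgc.mul hdc).intervalIntegrable _ _
    have hgvals : g (t + T) * x (t + T) - g t * x t = x t := by
      have : x (t + T) = x t := hper t
      rw [this, hg]
      have hT' : T ≠ 0 := ne_of_gt hT
      field_simp
      ring
    have hshift : ∫ s in t..(t + T), x s = ∫ s in (0:ℝ)..T, x s := by
      have := hper.intervalIntegral_add_eq t 0
      simpa using this
    have hrepr : x t - (1 / T) * ∫ τ in (0:ℝ)..T, x τ
        = ∫ s in t..(t + T), g s * deriv x s := by
      have h1 : (∫ s in t..(t + T), (1 / T) * x s) = (1 / T) * ∫ τ in (0:ℝ)..T, x τ := by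
        rw [intervalIntegral.integral_const_mul, hshift]
      have := ibp
      rw [hsplit, h1, hgvals] at this
      linarith
    -- the kernel integral
    have hker : (∫ s in t..(t + T), g s ^ 2) = T / 12 := by
      have hT' : T ≠ 0 := ne_of_gt hT
      have hgd2 : ∀ s : ℝ, HasDerivAt (fun s => (T / 3) * g s ^ 3) (g s ^ 2) s := by
        intro s
        have h := ((hgd s).pow 3).const_mul (T / 3)
        refine h.congr_deriv ?_
        push_cast
        field_simp
      have := intervalIntegral.integral_eq_sub_of_hasDerivAt
        (fun s (_ : s ∈ uIcc t (t + T)) => hgd2 s)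
        ((hgc.pow 2).intervalIntegrable _ _)
      rw [this]
      have hgt : g t = -(1 / 2) := by simp [hg]
      have hgtT : g (t + T) = 1 / 2 := by
        rw [hg]
        show (t + T - t) / T - 1 / 2 = 1 / 2
        rw [show t + T - t = T by ring, div_self hT']
        norm_num
      rw [hgtT, hgt]; ring
    have hshift2 : ∫ s in t..(t + T), (deriv x s) ^ 2 = ∫ τ in (0:ℝ)..T, (deriv x τ) ^ 2 := by
      have := hder2per.intervalIntegral_add_eq t 0
      simpa using this
    calc |x t - (1 / T) * ∫ τ in (0:ℝ)..T, x τ|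
        = |∫ s in t..(t + T), g s * deriv x s| := by rw [hrepr]
      _ ≤ Real.sqrt (∫ s in t..(t + T), g s ^ 2)
          * Real.sqrt (∫ s in t..(t + T), (deriv x s) ^ 2) :=
        interval_cauchy_schwarz t (t + T) htle g (deriv x) hgc hdc
      _ = Real.sqrt (T / 12) * Real.sqrt (∫ τ in (0:ℝ)..T, (deriv x τ) ^ 2) := by
        rw [hker, hshift2]
  refine ⟨main, ?_⟩
  intro M hM t
  have hM0 : 0 ≤ M := le_trans (abs_nonneg _) (hM 0)
  have hbound : (∫ τ in (0:ℝ)..T, (deriv x τ) ^ 2) ≤ T * M ^ 2 := by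
    have : (∫ τ in (0:ℝ)..T, (deriv x τ) ^ 2) ≤ ∫ _ in (0:ℝ)..T, M ^ 2 := by
      apply intervalIntegral.integral_mono_on hT.le
        ((hdc.pow 2).intervalIntegrable _ _) intervalIntegrable_const
      intro s _
      calc (deriv x s) ^ 2 = |deriv x s| ^ 2 := (sq_abs _).symm
        _ ≤ M ^ 2 := pow_le_pow_left₀ (abs_nonneg _) (hM s) 2
    simpa using this
  have h1 := main t
  have h2 : Real.sqrt (∫ τ in (0:ℝ)..T, (deriv x τ) ^ 2) ≤ Real.sqrt (T * M ^ 2) :=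
    Real.sqrt_le_sqrt hbound
  have h3 : Real.sqrt (T / 12) * Real.sqrt (T * M ^ 2) = (T / (2 * Real.sqrt 3)) * M := by
    rw [← Real.sqrt_mul (by positivity)]
    have hs3 : Real.sqrt 3 ^ 2 = 3 := Real.sq_sqrt (by norm_num)
    have hs3pos : (0:ℝ) < Real.sqrt 3 := Real.sqrt_pos.mpr (by norm_num)
    have heq : T / 12 * (T * M ^ 2) = ((T / (2 * Real.sqrt 3)) * M) ^ 2 := by
      field_simp
      nlinarith [hs3]
    rw [heq, Real.sqrt_sq (by positivity)]
  calc |x t - (1 / T) * ∫ τ in (0:ℝ)..T, x τ|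
      ≤ Real.sqrt (T / 12) * Real.sqrt (∫ τ in (0:ℝ)..T, (deriv x τ) ^ 2) := h1
    _ ≤ Real.sqrt (T / 12) * Real.sqrt (T * M ^ 2) := by
        exact mul_le_mul_of_nonneg_left h2 (Real.sqrt_nonneg _)
    _ = (T / (2 * Real.sqrt 3)) * M := h3
end

section
/- Let x : ℝ → ℝ be a continuously differentiable T-periodic function with |x'(t)| < c for all t and average (1/T)·∫₀ᵀ x(t) dt = π/2. Then for every δ > 0 with 2δ < cT, the Lebesgue measure of the set C_δ = {t ∈ [0, T] : |x(t) − π/2| ≤ δ} is strictly greater than 2δ/c. -/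
open Real Set MeasureTheory

/-- if `x` is `T`-periodic, `C¹`, with `|x'| < c` and average `π/2`, then
for `0 < δ` with `2δ < cT` the measure of `{t ∈ [0,T] : |x t - π/2| ≤ δ}` exceeds `2δ/c`. -/
theorem measure_near_average_lower_bound (c T : ℝ) (hc : 0 < c) (hT : 0 < T) (x : ℝ → ℝ)
    (hper : Function.Periodic x T) (hC1 : ContDiff ℝ 1 x)
    (hx' : ∀ t : ℝ, |deriv x t| < c)
    (havg : (1 / T) * ∫ t in (0:ℝ)..T, x t = Real.pi / 2)
    (δ : ℝ) (hδ : 0 < δ) (hδT : 2 * δ < c * T) :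
    ENNReal.ofReal (2 * δ / c)
      < volume {t ∈ Set.Icc (0:ℝ) T | |x t - Real.pi / 2| ≤ δ} := by
  have hxc : Continuous x := hC1.continuous
  have hdiff : Differentiable ℝ x := hC1.differentiable one_ne_zero
  have hdc : Continuous (deriv x) := hC1.continuous_deriv le_rfl
  have hne : (Set.Icc (0:ℝ) T).Nonempty := nonempty_Icc.mpr hT.le
  -- derivative is periodic
  have hderper : Function.Periodic (deriv x) T := by
    intro t
    rw [← deriv_comp_add_const]
    congr 1
    funext s
    exact hper s
  -- max of |deriv x| on [0,T]
  obtain ⟨tM, htM, hmax⟩ := isCompact_Icc.exists_isMaxOn hne (hdc.abs.continuousOn)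
  set M := |deriv x tM| with hM
  have hMc : M < c := hx' tM
  have hM0 : 0 ≤ M := abs_nonneg _
  -- global bound
  have hbound : ∀ t : ℝ, |deriv x t| ≤ M := by
    intro t
    have h1 : (0:ℝ) ≤ t - ⌊t / T⌋ * T := Int.sub_floor_div_mul_nonneg t hT
    have h2 : t - ⌊t / T⌋ * T < T := Int.sub_floor_div_mul_lt t hT
    have := hderper.sub_int_mul_eq (x := t) ⌊t / T⌋
    calc |deriv x t| = |deriv x (t - ⌊t / T⌋ * T)| := by rw [this]
      _ ≤ M := hmax ⟨h1, h2.le⟩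
  -- choose K
  set K : ℝ := (max M (2 * δ / T) + c) / 2 with hK
  have hdT : 2 * δ / T < c := (div_lt_iff₀ hT).mpr hδT
  have hmaxc : max M (2 * δ / T) < c := max_lt hMc hdT
  have hKc : K < c := by rw [hK]; linarith
  have hdT0 : 0 < 2 * δ / T := by positivity
  have hKpos : 0 < K := by
    have : 2 * δ / T ≤ max M (2 * δ / T) := le_max_right _ _
    rw [hK]; linarith
  have hMK : M ≤ K := by
    have : M ≤ max M (2 * δ / T) := le_max_left _ _
    rw [hK]; linarith
  have hKgt : 2 * δ / T < K := by
    have : 2 * δ / T ≤ max M (2 * δ / T) := le_max_right _ _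
    rw [hK]; linarith
  set r : ℝ := δ / K with hr
  have hr0 : 0 < r := div_pos hδ hKpos
  have h2rT : 2 * r < T := by
    have h1 : 2 * δ < K * T := by rw [div_lt_iff₀ hT] at hKgt; linarith
    rw [hr, show 2 * (δ / K) = (2 * δ) / K by ring, div_lt_iff₀ hKpos]
    linarith
  -- Lipschitz
  have hlip : ∀ s t : ℝ, |x s - x t| ≤ K * |s - t| := by
    intro s t
    have := convex_univ.norm_image_sub_le_of_norm_deriv_le
      (f := x) (fun u _ => hdiff u) (fun u _ => (hbound u).trans hMK)
      (mem_univ t) (mem_univ s)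
    simpa [Real.norm_eq_abs] using this
  -- existence of t0 with x t0 = π/2
  obtain ⟨ta, hta, hmin'⟩ := isCompact_Icc.exists_isMinOn hne hxc.continuousOn
  obtain ⟨tb, htb, hmax'⟩ := isCompact_Icc.exists_isMaxOn hne hxc.continuousOn
  have hint : ∫ t in (0:ℝ)..T, x t = T * (Real.pi / 2) := by
    field_simp at havg
    linarith [havg]
  have hintc : ∀ a : ℝ, ∫ t in (0:ℝ)..T, a = a * T := by
    intro a; simp [mul_comm]
  have hxa : x ta ≤ Real.pi / 2 := by
    have hle : ∫ t in (0:ℝ)..T, x ta ≤ ∫ t in (0:ℝ)..T, x t := by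
      apply intervalIntegral.integral_mono_on hT.le intervalIntegrable_const
        (hxc.intervalIntegrable 0 T)
      intro u hu; exact hmin' hu
    rw [hintc, hint] at hle
    nlinarith
  have hxb : Real.pi / 2 ≤ x tb := by
    have hle : ∫ t in (0:ℝ)..T, x t ≤ ∫ t in (0:ℝ)..T, x tb := by
      apply intervalIntegral.integral_mono_on hT.le (hxc.intervalIntegrable 0 T)
        intervalIntegrable_const
      intro u hu; exact hmax' hu
    rw [hintc, hint] at hle
    nlinarith
  have hivt : Real.pi / 2 ∈ x '' uIcc ta tb := by
    apply intermediate_value_uIcc hxc.continuousOn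
    exact mem_uIcc.mpr (Or.inl ⟨hxa, hxb⟩)
  obtain ⟨t0, ht0mem, ht0⟩ := hivt
  have ht0T : t0 ∈ Set.Icc (0:ℝ) T := by
    have : uIcc ta tb ⊆ Set.Icc (0:ℝ) T := by
      rw [← uIcc_of_le hT.le]
      exact uIcc_subset_uIcc (by rw [uIcc_of_le hT.le]; exact hta)
        (by rw [uIcc_of_le hT.le]; exact htb)
    exact this ht0mem
  -- points near t0 (mod T) are in the set
  have hnear : ∀ t : ℝ, |t - t0| ≤ r → |x t - Real.pi / 2| ≤ δ := by
    intro t ht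
    rw [← ht0]
    calc |x t - x t0| ≤ K * |t - t0| := hlip t t0
      _ ≤ K * r := by nlinarith [abs_nonneg (t - t0)]
      _ = δ := by rw [hr]; field_simp
  set S := {t ∈ Set.Icc (0:ℝ) T | |x t - Real.pi / 2| ≤ δ} with hS
  have hgoal : ENNReal.ofReal (2 * δ / c) < ENNReal.ofReal (2 * r) := by
    apply ENNReal.ofReal_lt_ofReal_iff_of_nonneg (by positivity) |>.mpr
    rw [hr, show 2 * (δ / K) = 2 * δ / K by ring]
    exact div_lt_div_of_pos_left (by linarith) hKpos hKc
  obtain ⟨h0, hTt0⟩ := ht0T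
  rcases lt_or_ge t0 r with hcase1 | hge
  · -- t0 - r < 0 : use [0, t0+r] ∪ [t0-r+T, T]
    have hsub1 : Set.Icc 0 (t0 + r) ⊆ S := by
      rintro t ⟨h1, h2⟩
      refine ⟨⟨h1, by linarith⟩, hnear t ?_⟩
      rw [abs_le]; constructor <;> linarith
    have hsub2 : Set.Icc (t0 - r + T) T ⊆ S := by
      rintro t ⟨h1, h2⟩
      refine ⟨⟨by linarith, h2⟩, ?_⟩
      have hx2 : x t = x (t - T) := by
        have := hper (t - T); rw [sub_add_cancel] at this; exact this
      rw [hx2]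
      apply hnear
      rw [abs_le]; constructor <;> linarith
    have hdisj : Disjoint (Set.Icc (0:ℝ) (t0 + r)) (Set.Icc (t0 - r + T) T) := by
      rw [Set.disjoint_left]
      rintro t ⟨_, h2⟩ ⟨h3, _⟩
      linarith
    have hun : Set.Icc (0:ℝ) (t0 + r) ∪ Set.Icc (t0 - r + T) T ⊆ S :=
      Set.union_subset hsub1 hsub2
    calc ENNReal.ofReal (2 * δ / c) < ENNReal.ofReal (2 * r) := hgoal
      _ = volume (Set.Icc (0:ℝ) (t0 + r) ∪ Set.Icc (t0 - r + T) T) := by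
          rw [measure_union hdisj measurableSet_Icc, Real.volume_Icc, Real.volume_Icc,
            ← ENNReal.ofReal_add (by linarith) (by linarith)]
          congr 1; ring
      _ ≤ volume S := measure_mono hun
  rcases le_or_gt (t0 + r) T with hle | hcase2
  · -- interior case
    have hsub : Set.Icc (t0 - r) (t0 + r) ⊆ S := by
      rintro t ⟨h1, h2⟩
      refine ⟨⟨by linarith, by linarith⟩, hnear t ?_⟩
      rw [abs_le]; constructor <;> linarith
    calc ENNReal.ofReal (2 * δ / c) < ENNReal.ofReal (2 * r) := hgoal
      _ = volume (Set.Icc (t0 - r) (t0 + r)) := by rw [Real.volume_Icc]; congr 1; ring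
      _ ≤ volume S := measure_mono hsub
  · -- t0 + r > T : use [0, t0+r-T] ∪ [t0-r, T]
    have hsub1 : Set.Icc (0:ℝ) (t0 + r - T) ⊆ S := by
      rintro t ⟨h1, h2⟩
      refine ⟨⟨h1, by linarith⟩, ?_⟩
      have hx2 : x t = x (t + T) := (hper t).symm
      rw [hx2]
      apply hnear
      rw [abs_le]; constructor <;> linarith
    have hsub2 : Set.Icc (t0 - r) T ⊆ S := by
      rintro t ⟨h1, h2⟩
      refine ⟨⟨by linarith, h2⟩, hnear t ?_⟩
      rw [abs_le]; constructor <;> linarith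
    have hdisj : Disjoint (Set.Icc (0:ℝ) (t0 + r - T)) (Set.Icc (t0 - r) T) := by
      rw [Set.disjoint_left]
      rintro t ⟨_, h2⟩ ⟨h3, _⟩
      linarith
    have hun : Set.Icc (0:ℝ) (t0 + r - T) ∪ Set.Icc (t0 - r) T ⊆ S :=
      Set.union_subset hsub1 hsub2
    calc ENNReal.ofReal (2 * δ / c) < ENNReal.ofReal (2 * r) := hgoal
      _ = volume (Set.Icc (0:ℝ) (t0 + r - T) ∪ Set.Icc (t0 - r) T) := by
          rw [measure_union hdisj measurableSet_Icc, Real.volume_Icc, Real.volume_Icc,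
            ← ENNReal.ofReal_add (by linarith) (by linarith)]
          congr 1; ring
      _ ≤ volume S := measure_mono hun
end

section
/- For every continuous T-periodic function h : ℝ → ℝ there exists a unique real number α = c(h) such that ∫₀ᵀ φ⁻¹(h(t) + α) dt = 0, where φ⁻¹(y) = y/√(1 + y²/c²) is the inverse of the relativistic operator; moreover, the map h ↦ c(h) is continuous with respect to the supremum norm on continuous T-periodic functions. -/
open Real Set MeasureTheory

/-- The inverse of the relativistic operator: `φ⁻¹(y) = y / √(1 + y²/c²)`. -/
noncomputable def phiInv (c y : ℝ) : ℝ := y / Real.sqrt (1 + y ^ 2 / c ^ 2)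

section Aux

variable {c T : ℝ}

lemma one_add_sq_pos (hc : 0 < c) (y : ℝ) : 0 < 1 + y ^ 2 / c ^ 2 := by positivity

lemma phiInv_hasDerivAt (hc : 0 < c) (y : ℝ) :
    HasDerivAt (phiInv c)
      ((1 * Real.sqrt (1 + y ^ 2 / c ^ 2) -
        y * (1 / (2 * Real.sqrt (1 + y ^ 2 / c ^ 2)) * (2 * y / c ^ 2))) /
        Real.sqrt (1 + y ^ 2 / c ^ 2) ^ 2) y := by
  have hu : 0 < 1 + y ^ 2 / c ^ 2 := one_add_sq_pos hc y
  have h1 : HasDerivAt (fun y : ℝ => 1 + y ^ 2 / c ^ 2) (2 * y / c ^ 2) y := by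
    simpa using ((hasDerivAt_pow 2 y).div_const (c ^ 2)).const_add 1
  have h2 : HasDerivAt (fun y : ℝ => Real.sqrt (1 + y ^ 2 / c ^ 2))
      (1 / (2 * Real.sqrt (1 + y ^ 2 / c ^ 2)) * (2 * y / c ^ 2)) y :=
    (Real.hasDerivAt_sqrt hu.ne').comp y h1
  exact (hasDerivAt_id y).div h2 (Real.sqrt_pos.mpr hu).ne'

lemma phiInv_deriv_eq (hc : 0 < c) (y : ℝ) :
    (1 * Real.sqrt (1 + y ^ 2 / c ^ 2) -
        y * (1 / (2 * Real.sqrt (1 + y ^ 2 / c ^ 2)) * (2 * y / c ^ 2))) /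
        Real.sqrt (1 + y ^ 2 / c ^ 2) ^ 2
      = 1 / Real.sqrt (1 + y ^ 2 / c ^ 2) ^ 3 := by
  have hu : 0 < 1 + y ^ 2 / c ^ 2 := one_add_sq_pos hc y
  set S := Real.sqrt (1 + y ^ 2 / c ^ 2) with hSdef
  have hS : 0 < S := Real.sqrt_pos.mpr hu
  have hSq : S ^ 2 = 1 + y ^ 2 / c ^ 2 := Real.sq_sqrt hu.le
  have hc2 : (c : ℝ) ^ 2 ≠ 0 := by positivity
  have hSq' : c ^ 2 * S ^ 2 = c ^ 2 + y ^ 2 := by rw [hSq]; field_simp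
  field_simp
  linear_combination hSq'

lemma phiInv_strictMono (hc : 0 < c) : StrictMono (phiInv c) := by
  apply strictMono_of_hasDerivAt_pos (f' := fun y =>
    (1 * Real.sqrt (1 + y ^ 2 / c ^ 2) -
        y * (1 / (2 * Real.sqrt (1 + y ^ 2 / c ^ 2)) * (2 * y / c ^ 2))) /
        Real.sqrt (1 + y ^ 2 / c ^ 2) ^ 2)
    (fun y => phiInv_hasDerivAt hc y)
  intro y
  rw [phiInv_deriv_eq hc y]
  have hu : 0 < 1 + y ^ 2 / c ^ 2 := one_add_sq_pos hc y
  have hS : 0 < Real.sqrt (1 + y ^ 2 / c ^ 2) := Real.sqrt_pos.mpr hu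
  positivity

lemma phiInv_lipschitz (hc : 0 < c) : LipschitzWith 1 (phiInv c) := by
  apply lipschitzWith_of_nnnorm_deriv_le
    (fun y => (phiInv_hasDerivAt hc y).differentiableAt)
  intro y
  rw [(phiInv_hasDerivAt hc y).deriv, phiInv_deriv_eq hc y]
  have hu : 0 < 1 + y ^ 2 / c ^ 2 := one_add_sq_pos hc y
  have hS : 1 ≤ Real.sqrt (1 + y ^ 2 / c ^ 2) := by
    have h1 : Real.sqrt 1 ≤ Real.sqrt (1 + y ^ 2 / c ^ 2) :=
      Real.sqrt_le_sqrt (by nlinarith [div_nonneg (sq_nonneg y) (sq_nonneg c)])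
    simpa using h1
  have hS3 : (1 : ℝ) ≤ Real.sqrt (1 + y ^ 2 / c ^ 2) ^ 3 := one_le_pow₀ hS
  rw [← NNReal.coe_le_coe]
  rw [coe_nnnorm, Real.norm_eq_abs, NNReal.coe_one]
  rw [abs_of_nonneg (by positivity)]
  rw [div_le_one (by positivity)]
  exact hS3

lemma phiInv_abs_sub_le (hc : 0 < c) (y z : ℝ) :
    |phiInv c y - phiInv c z| ≤ |y - z| := by
  have := (phiInv_lipschitz hc).dist_le_mul y z
  simpa [Real.dist_eq] using this

lemma phiInv_continuous (hc : 0 < c) : Continuous (phiInv c) :=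
  (phiInv_lipschitz hc).continuous

lemma phiInv_zero : phiInv c 0 = 0 := by simp [phiInv]

lemma phiInv_pos (hc : 0 < c) {y : ℝ} (hy : 0 < y) : 0 < phiInv c y := by
  have := phiInv_strictMono hc hy
  simpa [phiInv_zero] using this

/-- The parametric integral. -/
noncomputable def Fint (c T : ℝ) (h : ℝ → ℝ) (α : ℝ) : ℝ :=
  ∫ t in (0:ℝ)..T, phiInv c (h t + α)

lemma Fint_integrable (hc : 0 < c) (h : ℝ → ℝ) (hh : Continuous h) (α : ℝ) :
    IntervalIntegrable (fun t => phiInv c (h t + α)) volume 0 T :=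
  ((phiInv_continuous hc).comp (hh.add continuous_const)).intervalIntegrable 0 T

lemma Fint_strictMono (hc : 0 < c) (hT : 0 < T) (h : ℝ → ℝ) (hh : Continuous h) :
    StrictMono (Fint c T h) := by
  intro a b hab
  have hi1 := Fint_integrable (T := T) hc h hh a
  have hi2 := Fint_integrable (T := T) hc h hh b
  have hpos : 0 < ∫ t in (0:ℝ)..T, (phiInv c (h t + b) - phiInv c (h t + a)) := by
    apply intervalIntegral.intervalIntegral_pos_of_pos (f := fun t => phiInv c (h t + b) - phiInv c (h t + a))
      (hi2.sub hi1) _ hT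
    intro t
    have : h t + a < h t + b := by linarith
    exact sub_pos.mpr (phiInv_strictMono hc this)
  rw [intervalIntegral.integral_sub hi2 hi1] at hpos
  unfold Fint
  linarith

lemma Fint_continuous (hc : 0 < c) (hT : 0 < T) (h : ℝ → ℝ) (hh : Continuous h) :
    Continuous (Fint c T h) := by
  have : LipschitzWith (Real.toNNReal T) (Fint c T h) := by
    apply LipschitzWith.of_dist_le_mul
    intro a b
    rw [Real.dist_eq, Real.dist_eq]
    have key : Fint c T h a - Fint c T h b
        = ∫ t in (0:ℝ)..T, (phiInv c (h t + a) - phiInv c (h t + b)) := by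
      rw [Fint, Fint, intervalIntegral.integral_sub (Fint_integrable hc h hh a)
        (Fint_integrable hc h hh b)]
    rw [key]
    have := intervalIntegral.norm_integral_le_of_norm_le_const
      (a := (0:ℝ)) (b := T) (C := |a - b|)
      (f := fun t => phiInv c (h t + a) - phiInv c (h t + b)) ?_
    · rw [Real.norm_eq_abs] at this
      calc |∫ t in (0:ℝ)..T, (phiInv c (h t + a) - phiInv c (h t + b))|
          ≤ |a - b| * |T - 0| := this
        _ = T * |a - b| := by rw [sub_zero, abs_of_pos hT]; ring
        _ = (Real.toNNReal T : ℝ) * |a - b| := by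
            rw [Real.coe_toNNReal T hT.le]
    · intro t _
      rw [Real.norm_eq_abs]
      have := phiInv_abs_sub_le hc (h t + a) (h t + b)
      simpa using this
  exact this.continuous

lemma Fint_existsUnique (hc : 0 < c) (hT : 0 < T) (h : ℝ → ℝ) (hh : Continuous h) :
    ∃! α : ℝ, Fint c T h α = 0 := by
  obtain ⟨M, hM⟩ := (isCompact_Icc (a := (0:ℝ)) (b := T)).exists_bound_of_continuousOn
    hh.continuousOn
  have hM0 : 0 ≤ M := le_trans (norm_nonneg _) (hM 0 ⟨le_refl 0, hT.le⟩)
  have hk : 0 < phiInv c 1 := phiInv_pos hc one_pos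
  -- F (M+1) > 0
  have hpos : 0 < Fint c T h (M + 1) := by
    have : 0 < ∫ t in (0:ℝ)..T, phiInv c (h t + (M + 1)) := by
      apply lt_of_lt_of_le (b := ∫ _t in (0:ℝ)..T, phiInv c 1)
      · rw [intervalIntegral.integral_const]
        simp only [smul_eq_mul, sub_zero]
        positivity
      · apply intervalIntegral.integral_mono_on hT.le
          (intervalIntegrable_const) (Fint_integrable hc h hh (M + 1))
        intro t ht
        apply (phiInv_strictMono hc).monotone
        have := hM t ht
        rw [Real.norm_eq_abs] at this
        have := abs_le.mp this
        linarith [this.1]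
    exact this
  have hneg : Fint c T h (-(M + 1)) < 0 := by
    have : (∫ t in (0:ℝ)..T, phiInv c (h t + -(M + 1))) < 0 := by
      apply lt_of_le_of_lt (b := ∫ _t in (0:ℝ)..T, phiInv c (-1))
      · apply intervalIntegral.integral_mono_on hT.le
          (Fint_integrable hc h hh (-(M + 1))) (intervalIntegrable_const)
        intro t ht
        apply (phiInv_strictMono hc).monotone
        have := hM t ht
        rw [Real.norm_eq_abs] at this
        have := abs_le.mp this
        linarith [this.2]
      · rw [intervalIntegral.integral_const]
        simp only [smul_eq_mul, sub_zero]
        have : phiInv c (-1) < 0 := by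
          have := phiInv_strictMono hc (show (-1:ℝ) < 0 by norm_num)
          simpa [phiInv_zero] using this
        nlinarith
    exact this
  have hmono := Fint_strictMono hc hT h hh
  have hle : -(M + 1) ≤ M + 1 := by linarith
  obtain ⟨α, hα, hα0⟩ := intermediate_value_Icc hle
    ((Fint_continuous hc hT h hh).continuousOn)
    (show (0:ℝ) ∈ Icc (Fint c T h (-(M+1))) (Fint c T h (M+1)) from ⟨hneg.le, hpos.le⟩)
  refine ⟨α, hα0, ?_⟩
  intro β hβ
  exact hmono.injective (by rw [hβ, hα0])

end Aux

/-- for every continuous `T`-periodic `h` there is a unique `α = C(h)` with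
`∫₀ᵀ φ⁻¹(h(t) + α) dt = 0`, and `h ↦ C(h)` is continuous for the supremum norm. -/
theorem exists_unique_constant_and_continuous (c T : ℝ) (hc : 0 < c) (hT : 0 < T) :
    ∃ C : (ℝ → ℝ) → ℝ,
      (∀ h : ℝ → ℝ, Continuous h → Function.Periodic h T →
        (∫ t in (0:ℝ)..T, phiInv c (h t + C h)) = 0 ∧
        ∀ α : ℝ, (∫ t in (0:ℝ)..T, phiInv c (h t + α)) = 0 → α = C h) ∧
      (∀ h₁ : ℝ → ℝ, Continuous h₁ → Function.Periodic h₁ T →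
        ∀ ε : ℝ, 0 < ε → ∃ δ : ℝ, 0 < δ ∧
          ∀ h₂ : ℝ → ℝ, Continuous h₂ → Function.Periodic h₂ T →
            (∀ t : ℝ, |h₂ t - h₁ t| ≤ δ) → |C h₂ - C h₁| ≤ ε) := by
  classical
  set C : (ℝ → ℝ) → ℝ := fun h =>
    if hh : Continuous h then (Fint_existsUnique hc hT h hh).exists.choose else 0 with hC
  have hCspec : ∀ h : ℝ → ℝ, Continuous h → Fint c T h (C h) = 0 := by
    intro h hh
    simp only [hC, dif_pos hh]
    exact (Fint_existsUnique hc hT h hh).exists.choose_spec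
  have hCuniq : ∀ h : ℝ → ℝ, Continuous h → ∀ α, Fint c T h α = 0 → α = C h := by
    intro h hh α hα
    exact (Fint_strictMono hc hT h hh).injective (by rw [hα, hCspec h hh])
  refine ⟨C, ?_, ?_⟩
  · intro h hh _
    exact ⟨hCspec h hh, fun α hα => hCuniq h hh α hα⟩
  · intro h₁ hh₁ _ ε hε
    refine ⟨ε, hε, ?_⟩
    intro h₂ hh₂ _ hclose
    -- F₂ (C h₁ + ε) ≥ 0 and F₂ (C h₁ - ε) ≤ 0
    have hmono₂ := Fint_strictMono hc hT h₂ hh₂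
    have hub : 0 ≤ Fint c T h₂ (C h₁ + ε) := by
      rw [← hCspec h₁ hh₁]
      apply intervalIntegral.integral_mono_on hT.le
        (Fint_integrable hc h₁ hh₁ (C h₁)) (Fint_integrable hc h₂ hh₂ (C h₁ + ε))
      intro t _
      apply (phiInv_strictMono hc).monotone
      have := abs_le.mp (hclose t)
      linarith [this.1]
    have hlb : Fint c T h₂ (C h₁ - ε) ≤ 0 := by
      rw [← hCspec h₁ hh₁]
      apply intervalIntegral.integral_mono_on hT.le
        (Fint_integrable hc h₂ hh₂ (C h₁ - ε)) (Fint_integrable hc h₁ hh₁ (C h₁))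
      intro t _
      apply (phiInv_strictMono hc).monotone
      have := abs_le.mp (hclose t)
      linarith [this.2]
    have h2zero : Fint c T h₂ (C h₂) = 0 := hCspec h₂ hh₂
    rw [abs_sub_le_iff]
    constructor
    · by_contra hlt
      push_neg at hlt
      have : C h₁ + ε < C h₂ := by linarith
      have := hmono₂ this
      rw [h2zero] at this
      linarith
    · by_contra hlt
      push_neg at hlt
      have : C h₂ < C h₁ - ε := by linarith
      have := hmono₂ this
      rw [h2zero] at this
      linarith
end
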